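/- arXiv:1001.2928 — 12 statements merged into one kernel-verified Lean document; each statement's English description precedes it below -/
import Mathlib

section
/- If Ω : [-c, 0) → ℝ (with c > 0) is strictly monotonically increasing, positive, and C² on [-c,0), Ω(T) → +∞ as T → 0⁻, and the limit λ = lim_{T→0⁻} Ω''(T)·Ω(T)/(Ω'(T))² exists (possibly infinite), then λ ≥ 1. -/
open Filter Topology

lemma mono_aux {f f' : ℝ → ℝ} {s : Set ℝ} (hs : Convex ℝ s)
    (hd : ∀ t ∈ s, HasDerivAt f (f' t) t) (h0 : ∀ t ∈ s, 0 ≤ f' t) :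
    MonotoneOn f s := by
  intro x hx y hy hxy
  rcases eq_or_lt_of_le hxy with rfl | hxy
  · exact le_refl _
  have hsub : Set.Icc x y ⊆ s := hs.ordConnected.out hx hy
  obtain ⟨ξ, hξ, hslope⟩ := exists_hasDerivAt_eq_slope f f' hxy
    (fun t ht => (hd t (hsub ht)).continuousAt.continuousWithinAt)
    (fun t ht => hd t (hsub (Set.Ioo_subset_Icc_self ht)))
  have h0' := h0 ξ (hsub (Set.Ioo_subset_Icc_self hξ))
  have hxy' : (0:ℝ) < y - x := sub_pos.mpr hxy
  rw [hslope] at h0'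
  have := div_nonneg_iff.mp h0'
  rcases this with ⟨h1,_⟩ | ⟨_,h2⟩ <;> linarith

/-- Lemma B.1: if Ω is positive, strictly increasing and C² on [-c,0) with
Ω → +∞ as T → 0⁻, and λ = lim_{T→0⁻} Ω''Ω/(Ω')² exists in the extended reals,
then λ ≥ 1. -/
theorem lambda_ge_one_of_diverging
    (c : ℝ) (hc : 0 < c) (Ω Ω' Ω'' : ℝ → ℝ)
    (hderiv : ∀ T ∈ Set.Ico (-c) (0:ℝ), HasDerivAt Ω (Ω' T) T)
    (hderiv' : ∀ T ∈ Set.Ico (-c) (0:ℝ), HasDerivAt Ω' (Ω'' T) T)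
    (hcont : ContinuousOn Ω'' (Set.Ico (-c) 0))
    (hmono : StrictMonoOn Ω (Set.Ico (-c) 0))
    (hpos : ∀ T ∈ Set.Ico (-c) (0:ℝ), 0 < Ω T)
    (hpos' : ∀ T ∈ Set.Ico (-c) (0:ℝ), 0 < Ω' T)
    (hdiv : Tendsto Ω (𝓝[<] (0:ℝ)) atTop)
    (lam : EReal)
    (hlam : Tendsto (fun T => ((Ω'' T * Ω T / (Ω' T) ^ 2 : ℝ) : EReal))
      (𝓝[<] (0:ℝ)) (𝓝 lam)) :
    1 ≤ lam := by
  by_contra hlt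
  push_neg at hlt
  -- eventually the ratio is < 1
  have hev : ∀ᶠ T in 𝓝[<] (0:ℝ), Ω'' T * Ω T / (Ω' T) ^ 2 < 1 := by
    have := hlam.eventually_lt_const hlt
    filter_upwards [this] with T hT
    have : ((Ω'' T * Ω T / (Ω' T) ^ 2 : ℝ) : EReal) < ((1:ℝ) : EReal) := by
      simpa using hT
    exact_mod_cast this
  obtain ⟨l, hl, hsub⟩ := mem_nhdsLT_iff_exists_Ioo_subset.mp hev
  set t₀ : ℝ := max l (-c) / 2 with ht₀def
  have hmaxneg : max l (-c) < 0 := max_lt hl (neg_neg_iff_pos.mpr hc)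
  have ht₀0 : t₀ < 0 := by simp [ht₀def]; linarith
  have ht₀l : l < t₀ := by
    have h1 : l ≤ max l (-c) := le_max_left _ _
    have : max l (-c) < t₀ := by rw [ht₀def]; linarith
    linarith
  have ht₀c : -c < t₀ := by
    have h1 : -c ≤ max l (-c) := le_max_right _ _
    have : max l (-c) < t₀ := by rw [ht₀def]; linarith
    linarith
  set S : Set ℝ := Set.Ico t₀ 0 with hS
  have hSIco : S ⊆ Set.Ico (-c) 0 := fun t ht => ⟨le_of_lt (lt_of_lt_of_le ht₀c ht.1), ht.2⟩
  have hSsub : S ⊆ {T | Ω'' T * Ω T / (Ω' T) ^ 2 < 1} := by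
    intro t ht
    exact hsub ⟨lt_of_lt_of_le ht₀l ht.1, ht.2⟩
  have ht₀S : t₀ ∈ S := ⟨le_refl _, ht₀0⟩
  -- G = Ω/Ω' is monotone on S
  have hGmono : MonotoneOn (fun t => Ω t / Ω' t) S := by
    apply mono_aux (f' := fun t => 1 - Ω'' t * Ω t / (Ω' t) ^ 2) (convex_Ico _ _)
    · intro t ht
      have hne : Ω' t ≠ 0 := ne_of_gt (hpos' t (hSIco ht))
      have : HasDerivAt (fun t => Ω t / Ω' t) ((Ω' t * Ω' t - Ω t * Ω'' t) / Ω' t ^ 2) t :=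
        (hderiv t (hSIco ht)).div (hderiv' t (hSIco ht)) hne
      convert this using 1
      field_simp
    · intro t ht
      have := hSsub ht
      simp only [Set.mem_setOf_eq] at this
      linarith
  -- hence Ω' t ≤ K Ω t on S with K = Ω' t₀ / Ω t₀
  set K : ℝ := Ω' t₀ / Ω t₀ with hK
  have hΩt₀ : 0 < Ω t₀ := hpos t₀ (hSIco ht₀S)
  have hΩ't₀ : 0 < Ω' t₀ := hpos' t₀ (hSIco ht₀S)
  have hKpos : 0 < K := div_pos hΩ't₀ hΩt₀
  have hbound : ∀ t ∈ S, Ω' t ≤ K * Ω t := by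
    intro t ht
    have h1 : Ω t₀ / Ω' t₀ ≤ Ω t / Ω' t := hGmono ht₀S ht ht.1
    have hΩt : 0 < Ω t := hpos t (hSIco ht)
    have hΩ't : 0 < Ω' t := hpos' t (hSIco ht)
    rw [div_le_div_iff₀ hΩ't₀ hΩ't] at h1
    rw [hK, div_mul_eq_mul_div, le_div_iff₀ hΩt₀]
    nlinarith
  -- F = Ω t * exp(-K t) is antitone on S
  have hFanti : MonotoneOn (fun t => -(Ω t * Real.exp (-K * t))) S := by
    apply mono_aux (f' := fun t => -(Ω' t * Real.exp (-K * t)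
        + Ω t * (-K * Real.exp (-K * t)))) (convex_Ico _ _)
    · intro t ht
      have h1 : HasDerivAt (fun t => Real.exp (-K * t)) (-K * Real.exp (-K * t)) t := by
        have h0 : HasDerivAt (fun t : ℝ => -K * t) (-K) t := by
          simpa using (hasDerivAt_id t).const_mul (-K)
        have := h0.exp
        simpa [mul_comm] using this
      exact ((hderiv t (hSIco ht)).mul h1).neg
    · intro t ht
      have hb := hbound t ht
      have he : 0 < Real.exp (-K * t) := Real.exp_pos _
      have : Ω' t * Real.exp (-K * t) + Ω t * (-K * Real.exp (-K * t))
          = (Ω' t - K * Ω t) * Real.exp (-K * t) := by ring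
      rw [this]
      have : (Ω' t - K * Ω t) * Real.exp (-K * t) ≤ 0 :=
        mul_nonpos_of_nonpos_of_nonneg (by linarith) he.le
      linarith
  -- so Ω is bounded on S, contradiction with hdiv
  set M : ℝ := Ω t₀ * Real.exp (-K * t₀) with hM
  have hBdd : ∀ t ∈ S, Ω t ≤ M := by
    intro t ht
    have h1 := hFanti ht₀S ht ht.1
    simp only [neg_le_neg_iff] at h1
    have he : 1 ≤ Real.exp (-K * t) := Real.one_le_exp (by nlinarith [ht.2, hKpos])
    have hΩt : 0 < Ω t := hpos t (hSIco ht)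
    calc Ω t ≤ Ω t * Real.exp (-K * t) := le_mul_of_one_le_right hΩt.le he
      _ ≤ M := h1
  have hfreq : ∃ᶠ t in 𝓝[<] (0:ℝ), Ω t ≤ M := by
    have hmem : S ∈ 𝓝[<] (0:ℝ) := Ico_mem_nhdsLT_of_mem ⟨ht₀0, le_refl _⟩
    exact Eventually.frequently (eventually_of_mem hmem hBdd)
  have := hdiv.eventually (eventually_gt_atTop M)
  rcases (hfreq.and_eventually this).exists with ⟨t, h1, h2⟩
  linarith
end

section
/- If Ω : [-c, 0] → ℝ (with c > 0) is continuous on [-c,0], strictly monotonically decreasing, positive, and C² on [-c,0), Ω(0) = 0, and λ = lim_{T→0⁻} Ω''(T)·Ω(T)/(Ω'(T))² exists (possibly infinite), then λ ≤ 1. -/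
open Filter Topology

/-- Lemma B.2: if Ω is continuous on [-c,0], positive, strictly decreasing and
C² on [-c,0), Ω(0) = 0, and λ = lim_{T→0⁻} Ω''Ω/(Ω')² exists in the extended
reals, then λ ≤ 1. -/
theorem lambda_le_one_of_vanishing
    (c : ℝ) (hc : 0 < c) (Ω Ω' Ω'' : ℝ → ℝ)
    (hcontΩ : ContinuousOn Ω (Set.Icc (-c) 0))
    (hderiv : ∀ T ∈ Set.Ico (-c) (0:ℝ), HasDerivAt Ω (Ω' T) T)
    (hderiv' : ∀ T ∈ Set.Ico (-c) (0:ℝ), HasDerivAt Ω' (Ω'' T) T)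
    (hcont : ContinuousOn Ω'' (Set.Ico (-c) 0))
    (hanti : StrictAntiOn Ω (Set.Ico (-c) 0))
    (hpos : ∀ T ∈ Set.Ico (-c) (0:ℝ), 0 < Ω T)
    (hneg' : ∀ T ∈ Set.Ico (-c) (0:ℝ), Ω' T < 0)
    (hzero : Ω 0 = 0)
    (lam : EReal)
    (hlam : Tendsto (fun T => ((Ω'' T * Ω T / (Ω' T) ^ 2 : ℝ) : EReal))
      (𝓝[<] (0:ℝ)) (𝓝 lam)) :
    lam ≤ 1 := by
  by_contra hgt
  push_neg at hgt
  -- Eventually L T > 1 near 0⁻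
  have hev : ∀ᶠ T in 𝓝[<] (0:ℝ), (1:ℝ) < Ω'' T * Ω T / (Ω' T) ^ 2 := by
    have := hlam.eventually_const_lt hgt
    filter_upwards [this] with T hT
    exact_mod_cast hT
  -- choose l < 0 with the property on Ioo l 0
  obtain ⟨l1, hl1, hlsub⟩ := mem_nhdsLT_iff_exists_Ioo_subset.mp hev
  have l2 : l1 < 0 := hl1
  -- pick a
  set m : ℝ := max l1 (-c) with hm
  have hm0 : m < 0 := max_lt l2 (by linarith)
  set a : ℝ := m / 2 with ha
  have ham : m < a := by
    have : m < m / 2 := by linarith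
    simpa [ha] using this
  have ha0 : a < 0 := by simp only [ha]; linarith
  have hac : -c < a := lt_of_le_of_lt (le_max_right l1 (-c)) ham
  have haIco : a ∈ Set.Ico (-c) (0:ℝ) := ⟨le_of_lt hac, ha0⟩
  have hsub : Set.Ico a 0 ⊆ Set.Ico (-c) (0:ℝ) := fun x hx => ⟨le_trans (le_of_lt hac) hx.1, hx.2⟩
  have hL : ∀ x ∈ Set.Ioo a (0:ℝ), (1:ℝ) < Ω'' x * Ω x / (Ω' x) ^ 2 := by
    intro x hx
    exact hlsub ⟨lt_of_lt_of_le (lt_of_le_of_lt (le_max_left l1 (-c)) ham) (le_of_lt hx.1), hx.2⟩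
  -- g = Ω'/Ω is monotone on Ico a 0
  set g : ℝ → ℝ := fun T => Ω' T / Ω T with hg
  have hgd : ∀ x ∈ Set.Ico (-c) (0:ℝ),
      HasDerivAt g ((Ω'' x * Ω x - Ω' x * Ω' x) / Ω x ^ 2) x := by
    intro x hx
    exact (hderiv' x hx).div (hderiv x hx) (ne_of_gt (hpos x hx))
  have hgcont : ContinuousOn g (Set.Ico a 0) := by
    intro x hx
    exact ((hgd x (hsub hx)).continuousAt).continuousWithinAt
  have hmono : StrictMonoOn g (Set.Ico a 0) := by
    apply strictMonoOn_of_deriv_pos (convex_Ico a 0) hgcont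
    intro x hx
    rw [interior_Ico] at hx
    have hxIco : x ∈ Set.Ico (-c) (0:ℝ) := hsub ⟨le_of_lt hx.1, hx.2⟩
    rw [(hgd x hxIco).deriv]
    have h1' : (0:ℝ) < Ω' x ^ 2 := by
      exact pow_two_pos_of_ne_zero (ne_of_lt (hneg' x hxIco))
    have h2 : Ω' x ^ 2 < Ω'' x * Ω x := by
      have := hL x hx
      rw [lt_div_iff₀ h1'] at this
      linarith
    have h3 : (0:ℝ) < Ω x := hpos x hxIco
    have : 0 < Ω'' x * Ω x - Ω' x * Ω' x := by nlinarith [sq_nonneg (Ω' x)]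
    positivity
  -- log ∘ Ω has derivative g on Ico (-c) 0
  have hlogd : ∀ x ∈ Set.Ico (-c) (0:ℝ),
      HasDerivAt (fun T => Real.log (Ω T)) (g x) x := by
    intro x hx
    simpa [hg, div_eq_mul_inv, mul_comm] using (hderiv x hx).log (ne_of_gt (hpos x hx))
  -- lower bound for log Ω on Ioo a 0
  have hbound : ∀ T ∈ Set.Ioo a (0:ℝ), Real.log (Ω a) + g a * (-a) ≤ Real.log (Ω T) := by
    intro T hT
    have haT : a < T := hT.1
    have hT0 : T < 0 := hT.2
    have hIccsub : Set.Icc a T ⊆ Set.Ico (-c) (0:ℝ) := fun x hx =>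
      ⟨le_trans (le_of_lt hac) hx.1, lt_of_le_of_lt hx.2 hT0⟩
    have hcontlog : ContinuousOn (fun T => Real.log (Ω T)) (Set.Icc a T) := fun x hx =>
      ((hlogd x (hIccsub hx)).continuousAt).continuousWithinAt
    obtain ⟨ξ, hξ, hξeq⟩ := exists_hasDerivAt_eq_slope (fun T => Real.log (Ω T)) g haT
      hcontlog (fun x hx => hlogd x (hIccsub ⟨le_of_lt hx.1, le_of_lt hx.2⟩))
    have hξIco : ξ ∈ Set.Ico a 0 := ⟨le_of_lt hξ.1, lt_trans hξ.2 hT0⟩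
    have hga : g a ≤ g ξ := le_of_lt (hmono ⟨le_refl a, ha0⟩ hξIco hξ.1)
    have heq : Real.log (Ω T) - Real.log (Ω a) = g ξ * (T - a) := by
      rw [eq_div_iff (sub_ne_zero.mpr haT.ne')] at hξeq
      linarith [hξeq]
    have hTa : 0 < T - a := by linarith
    have h1 : g a * (T - a) ≤ g ξ * (T - a) := by nlinarith
    have hga0 : g a ≤ 0 := by
      have h1 := hneg' a haIco
      have h2 := hpos a haIco
      exact le_of_lt (div_neg_of_neg_of_pos h1 h2)
    have h2 : g a * (-a) ≤ g a * (T - a) := by nlinarith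
    linarith
  -- but log Ω T → -∞
  have hIooMem : Set.Ioo (-c) (0:ℝ) ∈ 𝓝[<] (0:ℝ) :=
    Ioo_mem_nhdsLT_of_mem ⟨neg_neg_iff_pos.mpr hc, le_refl 0⟩
  have hΩ0 : Tendsto Ω (𝓝[<] (0:ℝ)) (𝓝 0) := by
    have h0 : (0:ℝ) ∈ Set.Icc (-c) 0 := ⟨by linarith, le_refl 0⟩
    have h := (hcontΩ 0 h0).tendsto
    rw [hzero] at h
    exact h.mono_left (nhdsWithin_le_of_mem
      (mem_of_superset hIooMem Set.Ioo_subset_Icc_self))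
  have hΩpos : ∀ᶠ T in 𝓝[<] (0:ℝ), 0 < Ω T := by
    filter_upwards [hIooMem] with T hT
    exact hpos T ⟨le_of_lt hT.1, hT.2⟩
  have hlogBot : Tendsto (fun T => Real.log (Ω T)) (𝓝[<] (0:ℝ)) atBot := by
    apply Real.tendsto_log_nhdsGT_zero.comp
    rw [tendsto_nhdsWithin_iff]
    exact ⟨hΩ0, by filter_upwards [hΩpos] with T hT using hT⟩
  have hsmall : ∀ᶠ T in 𝓝[<] (0:ℝ),
      Real.log (Ω T) < Real.log (Ω a) + g a * (-a) :=
    hlogBot.eventually (eventually_lt_atBot _)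
  have hIooa : Set.Ioo a (0:ℝ) ∈ 𝓝[<] (0:ℝ) :=
    Ioo_mem_nhdsLT_of_mem ⟨ha0, le_refl 0⟩
  obtain ⟨T, hT1, hT2⟩ := (hsmall.and (eventually_mem_set.mpr hIooa)).exists
  exact absurd (hbound T hT2) (not_le.mpr hT1)
end

section
/- Let Ω be positive, strictly monotonically increasing, and C² on [-c, 0) with c > 0, with Ω'(T) > 0 on [-c,0), Ω(T) → +∞ as T → 0⁻, and suppose λ = lim_{T→0⁻} Ω''Ω/(Ω')² exists with λ ≠ 1. Then the limit of Ω'(T)/Ω(T) as T → 0⁻ exists and equals +∞. -/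
open Filter Topology

/-- Lemma B.4: if Ω is positive, strictly increasing and C² on [-c,0) with
Ω → +∞ as T → 0⁻, and λ = lim_{T→0⁻} Ω''Ω/(Ω')² exists with λ ≠ 1, then
Ω'/Ω → +∞ as T → 0⁻. -/
theorem ratio_tendsto_atTop_of_diverging
    (c : ℝ) (hc : 0 < c) (Ω Ω' Ω'' : ℝ → ℝ)
    (hderiv : ∀ T ∈ Set.Ico (-c) (0:ℝ), HasDerivAt Ω (Ω' T) T)
    (hderiv' : ∀ T ∈ Set.Ico (-c) (0:ℝ), HasDerivAt Ω' (Ω'' T) T)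
    (hcont : ContinuousOn Ω'' (Set.Ico (-c) 0))
    (hmono : StrictMonoOn Ω (Set.Ico (-c) 0))
    (hpos : ∀ T ∈ Set.Ico (-c) (0:ℝ), 0 < Ω T)
    (hpos' : ∀ T ∈ Set.Ico (-c) (0:ℝ), 0 < Ω' T)
    (hdiv : Tendsto Ω (𝓝[<] (0:ℝ)) atTop)
    (lam : EReal)
    (hlam : Tendsto (fun T => ((Ω'' T * Ω T / (Ω' T) ^ 2 : ℝ) : EReal))
      (𝓝[<] (0:ℝ)) (𝓝 lam))
    (hlam1 : lam ≠ 1) :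
    Tendsto (fun T => Ω' T / Ω T) (𝓝[<] (0:ℝ)) atTop := by
  -- Key lemma K : the ratio Ω'/Ω cannot be bounded on any interval [a, 0).
  have K : ∀ a ∈ Set.Ico (-c) (0:ℝ), ∀ M : ℝ,
      ¬ (∀ t ∈ Set.Ico a (0:ℝ), Ω' t / Ω t ≤ M) := by
    rintro a ⟨hac, ha0⟩ M hM
    have hsub : Set.Ico a (0:ℝ) ⊆ Set.Ico (-c) 0 := by
      intro t ht; exact ⟨le_trans hac ht.1, ht.2⟩
    set f : ℝ → ℝ := fun t => M * t - Real.log (Ω t) with hf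
    have hfd : ∀ t ∈ Set.Ico a (0:ℝ), HasDerivAt f (M - Ω' t / Ω t) t := by
      intro t ht
      have ht' := hsub ht
      have h1 : HasDerivAt (fun x : ℝ => M * x) M t := by
        simpa using (hasDerivAt_id t).const_mul M
      have h2 : HasDerivAt (fun x => Real.log (Ω x)) (Ω' t / Ω t) t :=
        (hderiv t ht').log (ne_of_gt (hpos t ht'))
      exact h1.sub h2
    have hmonf : MonotoneOn f (Set.Ico a 0) := by
      apply monotoneOn_of_deriv_nonneg (convex_Ico a 0)
      · exact fun t ht => (hfd t ht).continuousAt.continuousWithinAt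
      · intro t ht
        rw [interior_Ico] at ht
        exact ((hfd t (Set.Ioo_subset_Ico_self ht)).differentiableAt).differentiableWithinAt
      · intro t ht
        rw [interior_Ico] at ht
        have ht' : t ∈ Set.Ico a (0:ℝ) := Set.Ioo_subset_Ico_self ht
        rw [(hfd t ht').deriv]
        have := hM t ht'
        linarith
    set B : ℝ := 2 * (|M| * (-a)) + Real.log (Ω a) with hB
    have hbound : ∀ t ∈ Set.Ico a (0:ℝ), Real.log (Ω t) ≤ B := by
      intro t ht
      have hfa := hmonf ⟨le_refl a, ha0⟩ ht ht.1
      have hMt : M * t ≤ |M| * (-a) := by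
        calc M * t ≤ |M * t| := le_abs_self _
          _ = |M| * |t| := abs_mul M t
          _ ≤ |M| * (-a) := by
              apply mul_le_mul_of_nonneg_left _ (abs_nonneg M)
              rw [abs_of_nonpos (le_of_lt ht.2)]
              linarith [ht.1]
      have hMa : -(M * a) ≤ |M| * (-a) := by
        calc -(M * a) ≤ |M * a| := neg_le_abs _
          _ = |M| * |a| := abs_mul M a
          _ = |M| * (-a) := by rw [abs_of_nonpos (by linarith : a ≤ 0)]
      simp only [hf] at hfa
      simp only [hB]
      linarith
    have h1 : Set.Ico a (0:ℝ) ∈ 𝓝[<] (0:ℝ) := Ico_mem_nhdsLT_of_mem ⟨ha0, le_refl 0⟩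
    have h2 : ∀ᶠ t in 𝓝[<] (0:ℝ), Real.exp B < Ω t := hdiv.eventually_gt_atTop (Real.exp B)
    obtain ⟨t, ht2, ht1⟩ := (h2.and (eventually_of_mem h1 fun x hx => hx)).exists
    have := hbound t ht1
    have hOt : 0 < Ω t := hpos t (hsub ht1)
    rw [Real.log_le_iff_le_exp hOt] at this
    linarith
  -- derivative of u = Ω/Ω'
  have hu : ∀ t ∈ Set.Ico (-c) (0:ℝ),
      HasDerivAt (fun s => Ω s / Ω' s) (1 - Ω'' t * Ω t / (Ω' t) ^ 2) t := by
    intro t ht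
    have h := (hderiv t ht).div (hderiv' t ht) (ne_of_gt (hpos' t ht))
    refine h.congr_deriv ?_
    have h0 : (Ω' t) ≠ 0 := ne_of_gt (hpos' t ht)
    field_simp
  -- flipping reciprocal inequalities
  have flip : ∀ x y z w : ℝ, 0 < x → 0 < y → 0 < z → 0 < w →
      x / y ≤ z / w → w / z ≤ y / x := by
    intro x y z w hx hy hz hw h
    rw [div_le_div_iff₀ hy hw] at h
    rw [div_le_div_iff₀ hz hx]
    nlinarith
  rcases lt_or_gt_of_ne hlam1 with hlt | hgt
  · -- case λ < 1 : contradiction with Ω → ∞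
    exfalso
    have hev : ∀ᶠ T in 𝓝[<] (0:ℝ),
        ((Ω'' T * Ω T / (Ω' T) ^ 2 : ℝ) : EReal) < 1 := hlam.eventually_lt_const hlt
    obtain ⟨a, ha0, haI⟩ := mem_nhdsLT_iff_exists_Ico_subset.mp hev
    set t₀ : ℝ := max a (-c / 2) with ht₀
    have ht₀0 : t₀ < 0 := by
      apply max_lt ha0; linarith
    have ht₀m : t₀ ∈ Set.Ico (-c) (0:ℝ) := ⟨by simp [ht₀]; right; linarith, ht₀0⟩
    have hsubI : Set.Ico t₀ (0:ℝ) ⊆ Set.Ico (-c) 0 := fun t ht => ⟨le_trans ht₀m.1 ht.1, ht.2⟩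
    have hL : ∀ t ∈ Set.Ico t₀ (0:ℝ), Ω'' t * Ω t / (Ω' t) ^ 2 < 1 := by
      intro t ht
      have : t ∈ Set.Ico a (0:ℝ) := ⟨le_trans (le_max_left a _) ht.1, ht.2⟩
      have := haI this
      exact_mod_cast this
    have humono : MonotoneOn (fun s => Ω s / Ω' s) (Set.Ico t₀ 0) := by
      apply monotoneOn_of_deriv_nonneg (convex_Ico t₀ 0)
      · exact fun t ht => (hu t (hsubI ht)).continuousAt.continuousWithinAt
      · intro t ht
        rw [interior_Ico] at ht
        exact ((hu t (hsubI (Set.Ioo_subset_Ico_self ht))).differentiableAt).differentiableWithinAt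
      · intro t ht
        rw [interior_Ico] at ht
        have ht' : t ∈ Set.Ico t₀ (0:ℝ) := Set.Ioo_subset_Ico_self ht
        rw [(hu t (hsubI ht')).deriv]
        linarith [hL t ht']
    refine K t₀ ht₀m (Ω' t₀ / Ω t₀) ?_
    intro t ht
    have h1 := humono ⟨le_refl t₀, ht₀0⟩ ht ht.1
    exact flip (Ω t₀) (Ω' t₀) (Ω t) (Ω' t) (hpos t₀ ht₀m) (hpos' t₀ ht₀m)
      (hpos t (hsubI ht)) (hpos' t (hsubI ht)) h1
  · -- case λ > 1 : the ratio tends to infinity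
    have hev : ∀ᶠ T in 𝓝[<] (0:ℝ),
        (1 : EReal) < ((Ω'' T * Ω T / (Ω' T) ^ 2 : ℝ) : EReal) := hlam.eventually_const_lt hgt
    obtain ⟨a, ha0, haI⟩ := mem_nhdsLT_iff_exists_Ico_subset.mp hev
    set t₀ : ℝ := max a (-c / 2) with ht₀
    have ht₀0 : t₀ < 0 := by
      apply max_lt ha0; linarith
    have ht₀m : t₀ ∈ Set.Ico (-c) (0:ℝ) := ⟨by simp [ht₀]; right; linarith, ht₀0⟩
    have hsubI : Set.Ico t₀ (0:ℝ) ⊆ Set.Ico (-c) 0 := fun t ht => ⟨le_trans ht₀m.1 ht.1, ht.2⟩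
    have hL : ∀ t ∈ Set.Ico t₀ (0:ℝ), 1 < Ω'' t * Ω t / (Ω' t) ^ 2 := by
      intro t ht
      have : t ∈ Set.Ico a (0:ℝ) := ⟨le_trans (le_max_left a _) ht.1, ht.2⟩
      have := haI this
      exact_mod_cast this
    have huanti : AntitoneOn (fun s => Ω s / Ω' s) (Set.Ico t₀ 0) := by
      apply antitoneOn_of_deriv_nonpos (convex_Ico t₀ 0)
      · exact fun t ht => (hu t (hsubI ht)).continuousAt.continuousWithinAt
      · intro t ht
        rw [interior_Ico] at ht
        exact ((hu t (hsubI (Set.Ioo_subset_Ico_self ht))).differentiableAt).differentiableWithinAt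
      · intro t ht
        rw [interior_Ico] at ht
        have ht' : t ∈ Set.Ico t₀ (0:ℝ) := Set.Ioo_subset_Ico_self ht
        rw [(hu t (hsubI ht')).deriv]
        linarith [hL t ht']
    rw [tendsto_atTop]
    intro M
    have hK := K t₀ ht₀m M
    push_neg at hK
    obtain ⟨s, hs, hMs⟩ := hK
    have hIs : Set.Ico s (0:ℝ) ∈ 𝓝[<] (0:ℝ) := Ico_mem_nhdsLT_of_mem ⟨hs.2, le_refl 0⟩
    filter_upwards [hIs] with t ht
    have hts : t ∈ Set.Ico t₀ (0:ℝ) := ⟨le_trans hs.1 ht.1, ht.2⟩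
    have h1 : Ω t / Ω' t ≤ Ω s / Ω' s := huanti hs hts ht.1
    have h3 := flip (Ω t) (Ω' t) (Ω s) (Ω' s) (hpos t (hsubI hts)) (hpos' t (hsubI hts))
      (hpos s (hsubI hs)) (hpos' s (hsubI hs)) h1
    linarith
end

section
/- Let Ω be positive, strictly monotonically decreasing, and C² on [-c, 0) with c > 0, with Ω'(T) < 0 on [-c,0), continuous on [-c,0] with Ω(0) = 0, and suppose λ = lim_{T→0⁻} Ω''Ω/(Ω')² exists with λ ≠ 1. Then the limit of Ω'(T)/Ω(T) as T → 0⁻ exists and equals -∞. -/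
open Filter Topology

/-- Lemma B.5: if Ω is continuous on [-c,0], positive, strictly decreasing and
C² on [-c,0) with Ω' < 0, Ω(0) = 0, and λ = lim_{T→0⁻} Ω''Ω/(Ω')² exists with
λ ≠ 1, then Ω'/Ω → -∞ as T → 0⁻. -/
theorem ratio_tendsto_atBot_of_vanishing
    (c : ℝ) (hc : 0 < c) (Ω Ω' Ω'' : ℝ → ℝ)
    (hcontΩ : ContinuousOn Ω (Set.Icc (-c) 0))
    (hderiv : ∀ T ∈ Set.Ico (-c) (0:ℝ), HasDerivAt Ω (Ω' T) T)
    (hderiv' : ∀ T ∈ Set.Ico (-c) (0:ℝ), HasDerivAt Ω' (Ω'' T) T)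
    (hcont : ContinuousOn Ω'' (Set.Ico (-c) 0))
    (hanti : StrictAntiOn Ω (Set.Ico (-c) 0))
    (hpos : ∀ T ∈ Set.Ico (-c) (0:ℝ), 0 < Ω T)
    (hneg' : ∀ T ∈ Set.Ico (-c) (0:ℝ), Ω' T < 0)
    (hzero : Ω 0 = 0)
    (lam : EReal)
    (hlam : Tendsto (fun T => ((Ω'' T * Ω T / (Ω' T) ^ 2 : ℝ) : EReal))
      (𝓝[<] (0:ℝ)) (𝓝 lam))
    (hlam1 : lam ≠ 1) :
    Tendsto (fun T => Ω' T / Ω T) (𝓝[<] (0:ℝ)) atBot := by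
  -- Key lemma: Ω/Ω' cannot stay ≤ -m on an interval (a',0) with -m < a'.
  have key : ∀ a' ∈ Set.Ico (-c) (0:ℝ), ∀ m : ℝ, 0 < m → -m < a' →
      (∀ T ∈ Set.Ioo a' (0:ℝ), Ω T / Ω' T ≤ -m) → False := by
    intro a' ha' m hm hma' hall
    have ha'c : -c ≤ a' := ha'.1
    have ha'0 : a' < 0 := ha'.2
    have hΩa' : 0 < Ω a' := hpos a' ha'
    set K := Ω a' / m with hKdef
    have hKpos : 0 < K := div_pos hΩa' hm
    have hKm : K * m = Ω a' := div_mul_cancel₀ _ hm.ne'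
    have hmem : ∀ T ∈ Set.Ioo a' (0:ℝ), T ∈ Set.Ico (-c) (0:ℝ) := fun T hT =>
      ⟨le_trans ha'c hT.1.le, hT.2⟩
    have hgd : ∀ T ∈ Set.Ioo a' (0:ℝ),
        HasDerivAt (fun T => Ω T + K * T) (Ω' T + K) T := by
      intro T hT
      have h := (hderiv T (hmem T hT)).add ((hasDerivAt_id' T).const_mul K)
      rw [mul_one] at h
      exact h
    have hmono : MonotoneOn (fun T => Ω T + K * T) (Set.Icc a' 0) := by
      apply monotoneOn_of_deriv_nonneg (convex_Icc _ _)
      · exact (hcontΩ.mono (Set.Icc_subset_Icc ha'c le_rfl)).add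
          (continuous_const.mul continuous_id).continuousOn
      · rw [interior_Icc]
        exact fun T hT => ((hgd T hT).differentiableAt).differentiableWithinAt
      · rw [interior_Icc]
        intro T hT
        rw [(hgd T hT).deriv]
        have h1 := hall T hT
        have h2 : Ω T < Ω a' := hanti ha' (hmem T hT) hT.1
        have h3 := hneg' T (hmem T hT)
        have h4 := hpos T (hmem T hT)
        rw [div_le_iff_of_neg h3] at h1
        nlinarith [hKm]
    have hle : Ω a' + K * a' ≤ Ω 0 + K * 0 :=
      hmono (Set.left_mem_Icc.2 ha'0.le) (Set.right_mem_Icc.2 ha'0.le) ha'0.le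
    rw [hzero] at hle
    nlinarith [mul_pos hKpos (show (0:ℝ) < a' + m by linarith)]
  -- derivative of f = Ω/Ω'
  have hfd : ∀ T ∈ Set.Ico (-c) (0:ℝ),
      HasDerivAt (fun T => Ω T / Ω' T) (1 - Ω'' T * Ω T / (Ω' T) ^ 2) T := by
    intro T hT
    have hne := (hneg' T hT).ne
    have h := (hderiv T hT).div (hderiv' T hT) hne
    refine h.congr_deriv ?_
    field_simp
  -- extraction of intervals from nhdsWithin membership
  have hIoo : ∀ s ∈ 𝓝[<] (0:ℝ), ∃ a, -c ≤ a ∧ a < 0 ∧ Set.Ioo a 0 ⊆ s := by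
    intro s hs
    rw [mem_nhdsLT_iff_exists_Ioo_subset] at hs
    obtain ⟨l, hl, hsubs⟩ := hs
    refine ⟨max l (-(c/2)), le_trans (by linarith) (le_max_right _ _),
      max_lt hl (by linarith), fun x hx => hsubs ⟨lt_of_le_of_lt (le_max_left _ _) hx.1, hx.2⟩⟩
  rcases lt_or_gt_of_ne hlam1 with hlt | hgt
  · -- case lam < 1
    obtain ⟨r, hr1, hr2⟩ := EReal.exists_between_coe_real hlt
    have hr2' : r < 1 := by exact_mod_cast hr2
    have hev : ∀ᶠ T in 𝓝[<] (0:ℝ), Ω'' T * Ω T / (Ω' T) ^ 2 < r := by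
      filter_upwards [hlam.eventually (eventually_lt_nhds hr1)] with T hT
      exact_mod_cast hT
    obtain ⟨a, hac, ha0, hsub⟩ := hIoo _ hev
    have hmemIco : ∀ T ∈ Set.Ioo a (0:ℝ), T ∈ Set.Ico (-c) (0:ℝ) := fun T hT =>
      ⟨le_trans hac hT.1.le, hT.2⟩
    have hmono : StrictMonoOn (fun T => Ω T / Ω' T) (Set.Ioo a 0) := by
      apply strictMonoOn_of_deriv_pos (convex_Ioo _ _)
      · exact fun T hT => ((hfd T (hmemIco T hT)).continuousAt).continuousWithinAt
      · rw [interior_Ioo]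
        intro T hT
        rw [(hfd T (hmemIco T hT)).deriv]
        have := hsub hT
        simp only [Set.mem_setOf_eq] at this
        linarith
    rw [tendsto_atBot]
    intro Kb
    set b := min Kb (-1) with hbdef
    have hb0 : b < 0 := lt_of_le_of_lt (min_le_right _ _) (by norm_num)
    set m := -1 / b with hmdef
    have hm : 0 < m := by
      rw [hmdef, div_pos_iff]
      right
      constructor <;> linarith
    have hbm : b * m = -1 := by
      rw [hmdef]
      field_simp
      rw [div_self hb0.ne]
    set a' := max a (-(m/2)) with ha'def
    have ha'Ico : a' ∈ Set.Ico (-c) (0:ℝ) :=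
      ⟨le_trans hac (le_max_left _ _), max_lt ha0 (by linarith)⟩
    have ha'm : -m < a' := lt_of_lt_of_le (by linarith) (le_max_right _ _)
    by_cases hall : ∀ T ∈ Set.Ioo a' (0:ℝ), Ω T / Ω' T ≤ -m
    · exact (key a' ha'Ico m hm ha'm hall).elim
    · push_neg at hall
      obtain ⟨x, hx, hxm⟩ := hall
      have hxIoo : x ∈ Set.Ioo a (0:ℝ) :=
        ⟨lt_of_le_of_lt (le_max_left _ _) hx.1, hx.2⟩
      have hmemb : Set.Ioo x 0 ∈ 𝓝[<] (0:ℝ) := Ioo_mem_nhdsLT_of_mem ⟨hx.2, le_rfl⟩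
      filter_upwards [hmemb] with T hT
      have hTIoo : T ∈ Set.Ioo a (0:ℝ) := ⟨lt_trans hxIoo.1 hT.1, hT.2⟩
      have hTIco := hmemIco T hTIoo
      have hfT : -m < Ω T / Ω' T := lt_trans hxm (hmono hxIoo hTIoo hT.1)
      have hΩT : 0 < Ω T := hpos T hTIco
      have hΩ'T : Ω' T < 0 := hneg' T hTIco
      have h1 : Ω T < -m * Ω' T := by rwa [lt_div_iff_of_neg hΩ'T] at hfT
      have h2 : Ω' T ≤ b * Ω T := by
        nlinarith [mul_lt_mul_of_pos_left h1 (neg_pos.2 hb0), hbm]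
      have : Ω' T / Ω T ≤ b := by rw [div_le_iff₀ hΩT]; exact h2
      exact le_trans this (min_le_left _ _)
  · -- case lam > 1 : impossible, derive False
    obtain ⟨r, hr1, hr2⟩ := EReal.exists_between_coe_real hgt
    have hr1' : (1:ℝ) < r := by exact_mod_cast hr1
    have hev : ∀ᶠ T in 𝓝[<] (0:ℝ), r < Ω'' T * Ω T / (Ω' T) ^ 2 := by
      filter_upwards [hlam.eventually (eventually_gt_nhds hr2)] with T hT
      exact_mod_cast hT
    obtain ⟨a, hac, ha0, hsub⟩ := hIoo _ hev
    have hmemIco : ∀ T ∈ Set.Ioo a (0:ℝ), T ∈ Set.Ico (-c) (0:ℝ) := fun T hT =>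
      ⟨le_trans hac hT.1.le, hT.2⟩
    have hanti_f : StrictAntiOn (fun T => Ω T / Ω' T) (Set.Ioo a 0) := by
      apply strictAntiOn_of_deriv_neg (convex_Ioo _ _)
      · exact fun T hT => ((hfd T (hmemIco T hT)).continuousAt).continuousWithinAt
      · rw [interior_Ioo]
        intro T hT
        rw [(hfd T (hmemIco T hT)).deriv]
        have := hsub hT
        simp only [Set.mem_setOf_eq] at this
        linarith
    have hxIoo : a/2 ∈ Set.Ioo a (0:ℝ) := ⟨by linarith, by linarith⟩
    have hxIco := hmemIco _ hxIoo
    have hfx : Ω (a/2) / Ω' (a/2) < 0 :=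
      div_neg_of_pos_of_neg (hpos _ hxIco) (hneg' _ hxIco)
    set m := -(Ω (a/2) / Ω' (a/2)) with hmdef
    have hm : 0 < m := by rw [hmdef]; linarith
    set a' := max (a/2) (-(m/2)) with ha'def
    have ha'Ico : a' ∈ Set.Ico (-c) (0:ℝ) :=
      ⟨le_trans hxIco.1 (le_max_left _ _), max_lt hxIoo.2 (by linarith)⟩
    have ha'm : -m < a' := lt_of_lt_of_le (by linarith) (le_max_right _ _)
    have hall : ∀ T ∈ Set.Ioo a' (0:ℝ), Ω T / Ω' T ≤ -m := by
      intro T hT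
      have hT2 : T ∈ Set.Ioo a (0:ℝ) :=
        ⟨lt_trans hxIoo.1 (lt_of_le_of_lt (le_max_left _ _) hT.1), hT.2⟩
      have := hanti_f hxIoo hT2 (lt_of_le_of_lt (le_max_left _ _) hT.1)
      simp only at this
      linarith
    exact (key a' ha'Ico m hm ha'm hall).elim
end

section
/- Let Ω be positive, strictly monotonically increasing, and C² on [-c,0) with Ω'(T) > 0, and Ω(T) → +∞ as T → 0⁻. Suppose λ = lim_{T→0⁻} Ω''Ω/(Ω')² exists with λ ≠ 1 and λ ≠ 2. Then M(T) = Ω'(T)/Ω(T)² has a limit κ as T → 0⁻ (in the extended nonnegative reals), with 0 < κ ≤ +∞ if λ > 2 and 0 ≤ κ < +∞ if λ < 2. -/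
open Filter Topology

/-- Lemma B.6: under the diverging-Ω hypotheses with λ ∉ {1,2}, the ratio
M = Ω'/Ω² has a limit κ ∈ [0,∞] as T → 0⁻, with 0 < κ ≤ ∞ if λ > 2 and
0 ≤ κ < ∞ if λ < 2. -/
theorem M_limit_exists_of_diverging
    (c : ℝ) (hc : 0 < c) (Ω Ω' Ω'' : ℝ → ℝ)
    (hderiv : ∀ T ∈ Set.Ico (-c) (0:ℝ), HasDerivAt Ω (Ω' T) T)
    (hderiv' : ∀ T ∈ Set.Ico (-c) (0:ℝ), HasDerivAt Ω' (Ω'' T) T)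
    (hcont : ContinuousOn Ω'' (Set.Ico (-c) 0))
    (hmono : StrictMonoOn Ω (Set.Ico (-c) 0))
    (hpos : ∀ T ∈ Set.Ico (-c) (0:ℝ), 0 < Ω T)
    (hpos' : ∀ T ∈ Set.Ico (-c) (0:ℝ), 0 < Ω' T)
    (hdiv : Tendsto Ω (𝓝[<] (0:ℝ)) atTop)
    (lam : EReal)
    (hlam : Tendsto (fun T => ((Ω'' T * Ω T / (Ω' T) ^ 2 : ℝ) : EReal))
      (𝓝[<] (0:ℝ)) (𝓝 lam))
    (hlam1 : lam ≠ 1) (hlam2 : lam ≠ 2) :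
    ∃ κ : EReal,
      Tendsto (fun T => ((Ω' T / (Ω T) ^ 2 : ℝ) : EReal)) (𝓝[<] (0:ℝ)) (𝓝 κ) ∧
      0 ≤ κ ∧ (2 < lam → 0 < κ) ∧ (lam < 2 → κ < ⊤) := by
  have hM : ∀ T ∈ Set.Ico (-c) (0:ℝ),
      HasDerivAt (fun x => Ω' x / (Ω x) ^ 2)
        ((Ω'' T * (Ω T) ^ 2 - Ω' T * ((2:ℕ) * Ω T ^ 1 * Ω' T)) / ((Ω T) ^ 2) ^ 2) T := by
    intro T hT
    exact (hderiv' T hT).div ((hderiv T hT).pow 2) (ne_of_gt (pow_pos (hpos T hT) 2))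
  have hIoo : Set.Ioo (-c) (0:ℝ) ∈ 𝓝[<] (0:ℝ) :=
    Ioo_mem_nhdsLT (by linarith)
  rcases hlam2.lt_or_gt with h2 | h2
  · -- lam < 2 : eventually antitone
    have hev : ∀ᶠ T in 𝓝[<] (0:ℝ),
        ((Ω'' T * Ω T / (Ω' T) ^ 2 : ℝ) : EReal) < (2:EReal) :=
      hlam.eventually_lt_const h2
    have hmem : {T : ℝ | ((Ω'' T * Ω T / (Ω' T) ^ 2 : ℝ) : EReal) < (2:EReal)
        ∧ T ∈ Set.Ioo (-c) (0:ℝ)} ∈ 𝓝[<] (0:ℝ) :=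
      hev.and (eventually_of_mem hIoo fun x hx => hx)
    obtain ⟨l, hl0, hsub⟩ := mem_nhdsLT_iff_exists_Ioo_subset.mp hmem
    have hl0' : l < 0 := hl0
    have hico : ∀ x ∈ Set.Ioo l (0:ℝ), x ∈ Set.Ico (-c) (0:ℝ) := fun x hx =>
      ⟨(hsub hx).2.1.le, (hsub hx).2.2⟩
    have hmid : l / 2 ∈ Set.Ioo l (0:ℝ) := by constructor <;> linarith
    have hne : (Set.Ioo l (0:ℝ)).Nonempty := ⟨l / 2, hmid⟩
    have hsa : StrictAntiOn (fun x => Ω' x / (Ω x) ^ 2) (Set.Ioo l 0) := by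
      apply strictAntiOn_of_deriv_neg (convex_Ioo l 0)
      · exact fun x hx =>
          ((hM x (hico x hx)).differentiableAt).continuousAt.continuousWithinAt
      · intro x hx
        rw [interior_Ioo] at hx
        rw [(hM x (hico x hx)).deriv]
        have hΩx := hpos x (hico x hx)
        have hΩ'x := hpos' x (hico x hx)
        have hLx : Ω'' x * Ω x / (Ω' x) ^ 2 < 2 := by
          have h := (hsub hx).1
          rw [show (2:EReal) = ((2:ℝ):EReal) by norm_cast] at h
          exact EReal.coe_lt_coe_iff.mp h
        have h2' : Ω'' x * Ω x < 2 * (Ω' x) ^ 2 :=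
          (div_lt_iff₀ (pow_pos hΩ'x 2)).mp hLx
        apply div_neg_of_neg_of_pos
        · simp only [pow_one, Nat.cast_ofNat]
          nlinarith [mul_lt_mul_of_pos_left h2' hΩx]
        · positivity
    have hant : AntitoneOn (fun T => ((Ω' T / (Ω T) ^ 2 : ℝ) : EReal)) (Set.Ioo l 0) :=
      fun x hx y hy hxy => EReal.coe_le_coe_iff.mpr (hsa.antitoneOn hx hy hxy)
    refine ⟨sInf ((fun T => ((Ω' T / (Ω T) ^ 2 : ℝ) : EReal)) '' Set.Ioo l 0),
      hant.tendsto_nhdsWithin_Ioo_left hne (OrderBot.bddBelow _), ?_, ?_, ?_⟩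
    · refine le_sInf fun b hb => ?_
      obtain ⟨x, hx, rfl⟩ := hb
      have hΩx := hpos x (hico x hx)
      have hΩ'x := hpos' x (hico x hx)
      exact EReal.coe_nonneg.mpr (by positivity)
    · intro h; exact absurd (h.trans h2) (lt_irrefl _)
    · intro _
      exact lt_of_le_of_lt (sInf_le ⟨l / 2, hmid, rfl⟩) (EReal.coe_lt_top _)
  · -- 2 < lam : eventually monotone
    have hev : ∀ᶠ T in 𝓝[<] (0:ℝ),
        (2:EReal) < ((Ω'' T * Ω T / (Ω' T) ^ 2 : ℝ) : EReal) :=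
      hlam.eventually_const_lt h2
    have hmem : {T : ℝ | (2:EReal) < ((Ω'' T * Ω T / (Ω' T) ^ 2 : ℝ) : EReal)
        ∧ T ∈ Set.Ioo (-c) (0:ℝ)} ∈ 𝓝[<] (0:ℝ) :=
      hev.and (eventually_of_mem hIoo fun x hx => hx)
    obtain ⟨l, hl0, hsub⟩ := mem_nhdsLT_iff_exists_Ioo_subset.mp hmem
    have hl0' : l < 0 := hl0
    have hico : ∀ x ∈ Set.Ioo l (0:ℝ), x ∈ Set.Ico (-c) (0:ℝ) := fun x hx =>
      ⟨(hsub hx).2.1.le, (hsub hx).2.2⟩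
    have hmid : l / 2 ∈ Set.Ioo l (0:ℝ) := by constructor <;> linarith
    have hne : (Set.Ioo l (0:ℝ)).Nonempty := ⟨l / 2, hmid⟩
    have hsm : StrictMonoOn (fun x => Ω' x / (Ω x) ^ 2) (Set.Ioo l 0) := by
      apply strictMonoOn_of_deriv_pos (convex_Ioo l 0)
      · exact fun x hx =>
          ((hM x (hico x hx)).differentiableAt).continuousAt.continuousWithinAt
      · intro x hx
        rw [interior_Ioo] at hx
        rw [(hM x (hico x hx)).deriv]
        have hΩx := hpos x (hico x hx)
        have hΩ'x := hpos' x (hico x hx)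
        have hLx : 2 < Ω'' x * Ω x / (Ω' x) ^ 2 := by
          have h := (hsub hx).1
          rw [show (2:EReal) = ((2:ℝ):EReal) by norm_cast] at h
          exact EReal.coe_lt_coe_iff.mp h
        have h2' : 2 * (Ω' x) ^ 2 < Ω'' x * Ω x :=
          (lt_div_iff₀ (pow_pos hΩ'x 2)).mp hLx
        apply div_pos
        · simp only [pow_one, Nat.cast_ofNat]
          nlinarith [mul_lt_mul_of_pos_left h2' hΩx]
        · positivity
    have hmo : MonotoneOn (fun T => ((Ω' T / (Ω T) ^ 2 : ℝ) : EReal)) (Set.Ioo l 0) :=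
      fun x hx y hy hxy => EReal.coe_le_coe_iff.mpr (hsm.monotoneOn hx hy hxy)
    have hmidpos : (0:EReal) < ((Ω' (l / 2) / (Ω (l / 2)) ^ 2 : ℝ) : EReal) := by
      have hΩx := hpos _ (hico _ hmid)
      have hΩ'x := hpos' _ (hico _ hmid)
      exact EReal.coe_pos.mpr (by positivity)
    have hle : ((Ω' (l / 2) / (Ω (l / 2)) ^ 2 : ℝ) : EReal) ≤
        sSup ((fun T => ((Ω' T / (Ω T) ^ 2 : ℝ) : EReal)) '' Set.Ioo l 0) :=
      le_sSup ⟨l / 2, hmid, rfl⟩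
    refine ⟨sSup ((fun T => ((Ω' T / (Ω T) ^ 2 : ℝ) : EReal)) '' Set.Ioo l 0),
      hmo.tendsto_nhdsWithin_Ioo_left hne (OrderTop.bddAbove _), ?_, ?_, ?_⟩
    · exact le_trans hmidpos.le hle
    · intro _; exact lt_of_lt_of_le hmidpos hle
    · intro h; exact absurd (h2.trans h) (lt_irrefl _)
end

section
/- Let Ω be continuous on [-c,0], positive, strictly monotonically decreasing and C² on [-c,0) with Ω' < 0, and Ω(0) = 0. Suppose λ = lim_{T→0⁻} Ω''Ω/(Ω')² exists with λ ≠ 1. Then M(T) = Ω'(T)/Ω(T)² tends to -∞ as T → 0⁻. -/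
open Filter Topology

/-- Lemma B.8: under the vanishing-Ω hypotheses with λ ≠ 1,
M = Ω'/Ω² → -∞ as T → 0⁻. -/
theorem M_tendsto_atBot_of_vanishing
    (c : ℝ) (hc : 0 < c) (Ω Ω' Ω'' : ℝ → ℝ)
    (hcontΩ : ContinuousOn Ω (Set.Icc (-c) 0))
    (hderiv : ∀ T ∈ Set.Ico (-c) (0:ℝ), HasDerivAt Ω (Ω' T) T)
    (hderiv' : ∀ T ∈ Set.Ico (-c) (0:ℝ), HasDerivAt Ω' (Ω'' T) T)
    (hcont : ContinuousOn Ω'' (Set.Ico (-c) 0))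
    (hanti : StrictAntiOn Ω (Set.Ico (-c) 0))
    (hpos : ∀ T ∈ Set.Ico (-c) (0:ℝ), 0 < Ω T)
    (hneg' : ∀ T ∈ Set.Ico (-c) (0:ℝ), Ω' T < 0)
    (hzero : Ω 0 = 0)
    (lam : EReal)
    (hlam : Tendsto (fun T => ((Ω'' T * Ω T / (Ω' T) ^ 2 : ℝ) : EReal))
      (𝓝[<] (0:ℝ)) (𝓝 lam))
    (hlam1 : lam ≠ 1) :
    Tendsto (fun T => Ω' T / (Ω T) ^ 2) (𝓝[<] (0:ℝ)) atBot := by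
  set h : ℝ → ℝ := fun T => Ω T / Ω' T with hh
  have hIooIco : ∀ {T : ℝ}, T ∈ Set.Ioo (-c) (0:ℝ) → T ∈ Set.Ico (-c) (0:ℝ) :=
    fun ht => ⟨ht.1.le, ht.2⟩
  -- Ω → 0 from the left
  have hΩ0 : Tendsto Ω (𝓝[<] (0:ℝ)) (𝓝 0) := by
    have h1 : ContinuousWithinAt Ω (Set.Icc (-c) 0) 0 :=
      hcontΩ 0 ⟨by linarith, le_refl 0⟩
    have h2 : Tendsto Ω (𝓝[Set.Ioo (-c) 0] (0:ℝ)) (𝓝 (Ω 0)) :=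
      (h1.mono Set.Ioo_subset_Icc_self).tendsto
    rw [hzero] at h2
    rwa [nhdsWithin_Ioo_eq_nhdsLT (by linarith : (-c:ℝ) < 0)] at h2
  have hmemIoo : ∀ᶠ T in 𝓝[<] (0:ℝ), T ∈ Set.Ioo (-c) (0:ℝ) :=
    Ioo_mem_nhdsLT (by linarith)
  -- log Ω → -∞
  have hlogΩ : Tendsto (fun T => Real.log (Ω T)) (𝓝[<] (0:ℝ)) atBot := by
    apply Real.tendsto_log_nhdsGT_zero.comp
    rw [tendsto_nhdsWithin_iff]
    exact ⟨hΩ0, hmemIoo.mono fun T hT => hpos T (hIooIco hT)⟩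
  -- key: Ω'/Ω cannot be bounded below near 0
  have key : ∀ C : ℝ, ∀ T₀ : ℝ, T₀ ∈ Set.Ico (-c) (0:ℝ) →
      ¬ (∀ T ∈ Set.Ioo T₀ (0:ℝ), -C ≤ Ω' T / Ω T) := by
    intro C T₀ hT₀ hb
    set C' : ℝ := max C 0 + 1 with hC'
    have hC'pos : (0:ℝ) < C' := by
      have := le_max_right C 0; simp only [hC']; linarith
    set T₁ : ℝ := T₀ / 2 with hT₁def
    have hT₁mem : T₁ ∈ Set.Ioo T₀ (0:ℝ) :=
      ⟨by simp only [hT₁def]; linarith [hT₀.2], by simp only [hT₁def]; linarith [hT₀.2]⟩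
    have hsub : Set.Ico T₁ (0:ℝ) ⊆ Set.Ico (-c) 0 := by
      intro x hx
      exact ⟨le_trans (le_trans hT₀.1 hT₁mem.1.le) hx.1, hx.2⟩
    have hmono : StrictMonoOn (fun T => Real.log (Ω T) + C' * T) (Set.Ico T₁ 0) := by
      apply strictMonoOn_of_deriv_pos (convex_Ico _ _)
      · apply ContinuousOn.add
        · exact Real.continuousOn_log.comp (hcontΩ.mono (hsub.trans Set.Ico_subset_Icc_self))
            (fun x hx => (hpos x (hsub hx)).ne')
        · exact (continuous_const.mul continuous_id).continuousOn
      · intro x hx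
        rw [interior_Ico] at hx
        have hxm : x ∈ Set.Ico (-c) (0:ℝ) := hsub ⟨hx.1.le, hx.2⟩
        have hd2 : HasDerivAt (fun T : ℝ => C' * T) C' x := by
          simpa using (hasDerivAt_id x).const_mul C'
        have hd : HasDerivAt (fun T => Real.log (Ω T) + C' * T) (Ω' x / Ω x + C') x :=
          ((hderiv x hxm).log (hpos x hxm).ne').add hd2
        rw [hd.deriv]
        have hbx := hb x ⟨lt_trans hT₁mem.1 hx.1, hx.2⟩
        have := le_max_left C 0
        simp only [hC']
        linarith
    have hev : ∀ᶠ T in 𝓝[<] (0:ℝ),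
        Real.log (Ω T) < Real.log (Ω T₁) + C' * T₁ :=
      hlogΩ.eventually (eventually_lt_atBot _)
    have hev2 : Set.Ioo T₁ (0:ℝ) ∈ 𝓝[<] (0:ℝ) := Ioo_mem_nhdsLT hT₁mem.2
    obtain ⟨T, hT1, hT2⟩ := (hev.and hev2).exists
    have hle : Real.log (Ω T₁) + C' * T₁ ≤ Real.log (Ω T) + C' * T :=
      (hmono ⟨le_refl _, hT₁mem.2⟩ ⟨hT2.1.le, hT2.2⟩ hT2.1).le
    nlinarith [mul_nonneg hC'pos.le (neg_nonneg.2 hT2.2.le)]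
  -- derivative of h
  have hDh : ∀ T ∈ Set.Ico (-c) (0:ℝ),
      HasDerivAt h (1 - Ω'' T * Ω T / (Ω' T) ^ 2) T := by
    intro T hT
    have hne := (hneg' T hT).ne
    have hd := (hderiv T hT).div (hderiv' T hT) hne
    refine hd.congr_deriv ?_
    rw [eq_comm, eq_div_iff (pow_ne_zero 2 hne), sub_mul, div_mul_cancel₀ _ (pow_ne_zero 2 hne)]
    ring
  have hhneg : ∀ T ∈ Set.Ico (-c) (0:ℝ), h T < 0 :=
    fun T hT => div_neg_of_pos_of_neg (hpos T hT) (hneg' T hT)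
  have hinv : ∀ T, Ω' T / Ω T = 1 / h T := by
    intro T; rw [hh]; simp only [one_div_div]
  rcases hlam1.lt_or_gt with hlt | hgt
  · -- case lam < 1 : h eventually strictly increasing
    have hevq : ∀ᶠ T in 𝓝[<] (0:ℝ), Ω'' T * Ω T / (Ω' T) ^ 2 < 1 := by
      filter_upwards [hlam.eventually (Iio_mem_nhds hlt)] with T hT
      exact_mod_cast hT
    obtain ⟨t, ht0, htsub⟩ :=
      mem_nhdsLT_iff_exists_Ioo_subset.1 (hevq.and hmemIoo)
    set T₁ : ℝ := max t (-(c/2)) with hT₁def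
    have hT₁neg : T₁ < 0 := by
      simp only [hT₁def]; exact max_lt ht0 (by linarith)
    have hT₁mem : T₁ ∈ Set.Ico (-c) (0:ℝ) :=
      ⟨le_trans (by linarith) (le_max_right t (-(c/2))), hT₁neg⟩
    have hsub2 : Set.Ioo T₁ (0:ℝ) ⊆ Set.Ioo t 0 := fun x hx =>
      ⟨lt_of_le_of_lt (le_max_left t _) hx.1, hx.2⟩
    have hsub3 : Set.Ico T₁ (0:ℝ) ⊆ Set.Ico (-c) 0 := fun x hx =>
      ⟨le_trans hT₁mem.1 hx.1, hx.2⟩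
    have hmono : StrictMonoOn h (Set.Ico T₁ 0) := by
      apply strictMonoOn_of_deriv_pos (convex_Ico _ _)
      · exact fun x hx => ((hDh x (hsub3 hx)).continuousAt).continuousWithinAt
      · intro x hx
        rw [interior_Ico] at hx
        have hq := (htsub (hsub2 hx)).1
        rw [(hDh x (hsub3 ⟨hx.1.le, hx.2⟩)).deriv]
        linarith
    have hg : Tendsto (fun T => Ω' T / Ω T) (𝓝[<] (0:ℝ)) atBot := by
      by_cases hA : ∃ ε > (0:ℝ), ∀ T ∈ Set.Ioo T₁ (0:ℝ), h T ≤ -ε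
      · exfalso
        obtain ⟨ε, hε, hbd⟩ := hA
        apply key (1/ε) T₁ hT₁mem
        intro T hT
        have h1 : h T ≤ -ε := hbd T hT
        have h2 := one_div_le_one_div_of_neg_of_le (by linarith : (-ε:ℝ) < 0) h1
        rw [hinv T]
        rw [div_neg] at h2
        linarith
      · push_neg at hA
        rw [tendsto_atBot]
        intro b
        set b' : ℝ := min b (-1) with hb'def
        have hb'neg : b' < 0 := lt_of_le_of_lt (min_le_right _ _) (by norm_num)
        have hεpos : (0:ℝ) < -(1/b') := by
          have : 1/b' < 0 := div_neg_of_pos_of_neg one_pos hb'neg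
          linarith
        obtain ⟨T₂, hT₂mem, hT₂⟩ := hA (-(1/b')) hεpos
        rw [neg_neg] at hT₂
        filter_upwards [Ioo_mem_nhdsLT hT₂mem.2] with T hT
        have hTmem : T ∈ Set.Ico T₁ (0:ℝ) := ⟨le_trans hT₂mem.1.le hT.1.le, hT.2⟩
        have hmle : h T₂ ≤ h T :=
          (hmono ⟨hT₂mem.1.le, hT₂mem.2⟩ hTmem hT.1).le
        have h1b : 1/b' ≤ h T := le_trans hT₂.le hmle
        have hTneg : h T < 0 := hhneg T (hsub3 hTmem)
        have h3 := one_div_le_one_div_of_neg_of_le hTneg h1b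
        rw [one_div_one_div] at h3
        rw [hinv T]
        exact le_trans h3 (min_le_left _ _)
    apply tendsto_atBot_mono' _ _ hg
    filter_upwards [hmemIoo, hΩ0.eventually (Iio_mem_nhds (by norm_num : (0:ℝ) < 1))]
      with T hT hT1
    have hΩp := hpos T (hIooIco hT)
    have hΩ'n := hneg' T (hIooIco hT)
    rw [div_le_div_iff₀ (by positivity) hΩp]
    nlinarith [mul_pos hΩp (by linarith : (0:ℝ) < 1 - Ω T)]
  · -- case 1 < lam : h eventually strictly decreasing, contradiction
    exfalso
    have hevq : ∀ᶠ T in 𝓝[<] (0:ℝ), 1 < Ω'' T * Ω T / (Ω' T) ^ 2 := by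
      filter_upwards [hlam.eventually (Ioi_mem_nhds hgt)] with T hT
      exact_mod_cast hT
    obtain ⟨t, ht0, htsub⟩ :=
      mem_nhdsLT_iff_exists_Ioo_subset.1 (hevq.and hmemIoo)
    set T₁ : ℝ := max t (-(c/2)) with hT₁def
    have hT₁neg : T₁ < 0 := by
      simp only [hT₁def]; exact max_lt ht0 (by linarith)
    have hT₁mem : T₁ ∈ Set.Ico (-c) (0:ℝ) :=
      ⟨le_trans (by linarith) (le_max_right t (-(c/2))), hT₁neg⟩
    have hsub2 : Set.Ioo T₁ (0:ℝ) ⊆ Set.Ioo t 0 := fun x hx =>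
      ⟨lt_of_le_of_lt (le_max_left t _) hx.1, hx.2⟩
    have hsub3 : Set.Ico T₁ (0:ℝ) ⊆ Set.Ico (-c) 0 := fun x hx =>
      ⟨le_trans hT₁mem.1 hx.1, hx.2⟩
    have hmono : StrictAntiOn h (Set.Ico T₁ 0) := by
      apply strictAntiOn_of_deriv_neg (convex_Ico _ _)
      · exact fun x hx => ((hDh x (hsub3 hx)).continuousAt).continuousWithinAt
      · intro x hx
        rw [interior_Ico] at hx
        have hq := (htsub (hsub2 hx)).1
        rw [(hDh x (hsub3 ⟨hx.1.le, hx.2⟩)).deriv]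
        linarith
    set T₂ : ℝ := T₁ / 2 with hT₂def
    have hT₂mem : T₂ ∈ Set.Ioo T₁ (0:ℝ) :=
      ⟨by simp only [hT₂def]; linarith, by simp only [hT₂def]; linarith⟩
    have hT₂neg : h T₂ < 0 := hhneg T₂ (hsub3 ⟨hT₂mem.1.le, hT₂mem.2⟩)
    apply key (-(1/h T₂)) T₂ (hsub3 ⟨hT₂mem.1.le, hT₂mem.2⟩)
    intro T hT
    have hTmem : T ∈ Set.Ico T₁ (0:ℝ) := ⟨le_trans hT₂mem.1.le hT.1.le, hT.2⟩
    have hmle : h T ≤ h T₂ :=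
      (hmono ⟨hT₂mem.1.le, hT₂mem.2⟩ hTmem hT.1).le
    have h3 := one_div_le_one_div_of_neg_of_le hT₂neg hmle
    rw [hinv T, neg_neg]
    exact h3
end

section
/- Let Ω be positive, strictly monotonically increasing, and C² on [-c,0) with Ω' > 0 and Ω → +∞ as T → 0⁻, and suppose λ = lim_{T→0⁻} Ω''Ω/(Ω')² exists with λ ∉ {1, 2}. Then N(T) = L(T)²·M(T)⁴, where L = Ω''Ω/(Ω')² and M = Ω'/Ω², has a limit ϱ as T → 0⁻ in the extended nonnegative reals, with 0 < ϱ ≤ +∞ if λ > 2 and 0 ≤ ϱ < +∞ if λ < 2. -/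
open Filter Topology Set

/-- Extract a one-sided window from an eventual property at `0⁻`. -/
private lemma extract_window {P : ℝ → Prop} (h : ∀ᶠ T in 𝓝[<] (0:ℝ), P T) :
    ∃ T₀ : ℝ, T₀ < 0 ∧ ∀ T ∈ Set.Ico T₀ (0:ℝ), P T := by
  obtain ⟨l, hl, hsub⟩ := mem_nhdsLT_iff_exists_Ioo_subset.1 h
  have hl0 : l < 0 := hl
  exact ⟨l / 2, by linarith, fun T hT => hsub ⟨by linarith [hT.1], hT.2⟩⟩

private lemma hasDerivAt_M (Ω Ω' Ω'' : ℝ → ℝ) {T : ℝ}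
    (h1 : HasDerivAt Ω (Ω' T) T) (h2 : HasDerivAt Ω' (Ω'' T) T) (hΩ : 0 < Ω T) :
    HasDerivAt (fun x => Ω' x / Ω x ^ 2)
      ((Ω'' T * Ω T - 2 * Ω' T ^ 2) / Ω T ^ 3) T := by
  have h := h2.div (h1.pow 2) (pow_ne_zero 2 hΩ.ne')
  refine h.congr_deriv ?_
  have : Ω T ≠ 0 := hΩ.ne'
  simp only [Pi.pow_apply]
  field_simp
  ring

/-- Lemma B.9: under the diverging-Ω hypotheses with λ ∉ {1,2}, the function
N = L²·M⁴ (with L = Ω''Ω/(Ω')² and M = Ω'/Ω²) has a limit ϱ ∈ [0,∞] as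
T → 0⁻, with 0 < ϱ ≤ ∞ if λ > 2 and 0 ≤ ϱ < ∞ if λ < 2. -/
theorem N_limit_exists_of_diverging
    (c : ℝ) (hc : 0 < c) (Ω Ω' Ω'' : ℝ → ℝ)
    (hderiv : ∀ T ∈ Set.Ico (-c) (0:ℝ), HasDerivAt Ω (Ω' T) T)
    (hderiv' : ∀ T ∈ Set.Ico (-c) (0:ℝ), HasDerivAt Ω' (Ω'' T) T)
    (hcont : ContinuousOn Ω'' (Set.Ico (-c) 0))
    (hmono : StrictMonoOn Ω (Set.Ico (-c) 0))
    (hpos : ∀ T ∈ Set.Ico (-c) (0:ℝ), 0 < Ω T)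
    (hpos' : ∀ T ∈ Set.Ico (-c) (0:ℝ), 0 < Ω' T)
    (hdiv : Tendsto Ω (𝓝[<] (0:ℝ)) atTop)
    (lam : EReal)
    (hlam : Tendsto (fun T => ((Ω'' T * Ω T / (Ω' T) ^ 2 : ℝ) : EReal))
      (𝓝[<] (0:ℝ)) (𝓝 lam))
    (hlam1 : lam ≠ 1) (hlam2 : lam ≠ 2) :
    ∃ ϱ : EReal,
      Tendsto
        (fun T => (((Ω'' T * Ω T / (Ω' T) ^ 2) ^ 2 * (Ω' T / (Ω T) ^ 2) ^ 4 : ℝ) : EReal))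
        (𝓝[<] (0:ℝ)) (𝓝 ϱ) ∧
      0 ≤ ϱ ∧ (2 < lam → 0 < ϱ) ∧ (lam < 2 → ϱ < ⊤) := by
  set L : ℝ → ℝ := fun T => Ω'' T * Ω T / (Ω' T) ^ 2 with hLdef
  set M : ℝ → ℝ := fun T => Ω' T / (Ω T) ^ 2 with hMdef
  have hIco : ∀ᶠ T in 𝓝[<] (0:ℝ), T ∈ Set.Ico (-c) 0 :=
    mem_of_superset (Ioo_mem_nhdsLT (by linarith : -c < (0:ℝ)))
      (fun x hx => ⟨hx.1.le, hx.2⟩)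
  -- Step 1 : 1 ≤ lam
  have hge1 : (1 : EReal) ≤ lam := by
    by_contra hlt
    push_neg at hlt
    obtain ⟨r, hr1, hr2⟩ := EReal.exists_between_coe_real hlt
    have hrlt1 : r < 1 := by exact_mod_cast hr2
    have hev : ∀ᶠ T in 𝓝[<] (0:ℝ), L T < r := by
      filter_upwards [hlam.eventually_lt_const hr1] with T hT
      exact_mod_cast hT
    obtain ⟨T₀, hT₀, hwin⟩ := extract_window (hev.and hIco)
    have hT₀mem : T₀ ∈ Set.Ico T₀ (0:ℝ) := ⟨le_refl _, hT₀⟩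
    have hT₀c : T₀ ∈ Set.Ico (-c) (0:ℝ) := (hwin T₀ hT₀mem).2
    -- g = Ω / Ω' is monotone on [T₀, 0)
    have hgmono : MonotoneOn (fun T => Ω T / Ω' T) (Set.Ico T₀ 0) := by
      apply monotoneOn_of_deriv_nonneg (convex_Ico _ _)
      · intro x hx
        have hx' := (hwin x hx).2
        exact (((hderiv x hx').div (hderiv' x hx') (hpos' x hx').ne').continuousAt).continuousWithinAt
      · rw [interior_Ico]
        intro x hx
        have hx' := (hwin x ⟨hx.1.le, hx.2⟩).2
        exact (((hderiv x hx').div (hderiv' x hx') (hpos' x hx').ne').differentiableAt).differentiableWithinAt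
      · rw [interior_Ico]
        intro x hx
        have hxm : x ∈ Set.Ico T₀ (0:ℝ) := ⟨hx.1.le, hx.2⟩
        have hx' := (hwin x hxm).2
        have hd : HasDerivAt (fun T => Ω T / Ω' T) ((Ω' x * Ω' x - Ω x * Ω'' x) / Ω' x ^ 2) x :=
          (hderiv x hx').div (hderiv' x hx') (hpos' x hx').ne'
        rw [hd.deriv]
        have hLx : L x < r := (hwin x hxm).1
        have hO := hpos x hx'
        have hO' := hpos' x hx'
        have hnum : Ω'' x * Ω x < r * Ω' x ^ 2 := by
          have := (div_lt_iff₀ (by positivity : (0:ℝ) < Ω' x ^ 2)).1 hLx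
          linarith
        apply div_nonneg _ (by positivity)
        nlinarith
    -- hence Ω'/Ω ≤ K on [T₀, 0)
    set K : ℝ := Ω' T₀ / Ω T₀ with hKdef
    have hK : 0 < K := div_pos (hpos' T₀ hT₀c) (hpos T₀ hT₀c)
    have hbound : ∀ T ∈ Set.Ico T₀ (0:ℝ), Ω' T / Ω T ≤ K := by
      intro T hT
      have h1 : Ω T₀ / Ω' T₀ ≤ Ω T / Ω' T := hgmono hT₀mem hT hT.1
      have hO := hpos T (hwin T hT).2
      have hO' := hpos' T (hwin T hT).2
      have hO₀ := hpos T₀ hT₀c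
      have hO₀' := hpos' T₀ hT₀c
      rw [div_le_div_iff₀ hO₀' hO'] at h1
      show Ω' T / Ω T ≤ Ω' T₀ / Ω T₀
      rw [div_le_div_iff₀ hO hO₀]
      nlinarith
    -- h = log Ω - K·T is antitone on [T₀, 0)
    have hhanti : AntitoneOn (fun T => Real.log (Ω T) - K * T) (Set.Ico T₀ 0) := by
      apply antitoneOn_of_deriv_nonpos (convex_Ico _ _)
      · intro x hx
        have hx' := (hwin x hx).2
        exact ((((hderiv x hx').log (hpos x hx').ne').sub
          ((hasDerivAt_id x).const_mul K)).continuousAt).continuousWithinAt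
      · rw [interior_Ico]
        intro x hx
        have hx' := (hwin x ⟨hx.1.le, hx.2⟩).2
        exact ((((hderiv x hx').log (hpos x hx').ne').sub
          ((hasDerivAt_id x).const_mul K)).differentiableAt).differentiableWithinAt
      · rw [interior_Ico]
        intro x hx
        have hxm : x ∈ Set.Ico T₀ (0:ℝ) := ⟨hx.1.le, hx.2⟩
        have hx' := (hwin x hxm).2
        have hd : HasDerivAt (fun T => Real.log (Ω T) - K * T) (Ω' x / Ω x - K) x := by
          have h := ((hderiv x hx').log (hpos x hx').ne').sub ((hasDerivAt_id x).const_mul K)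
          exact h.congr_deriv (by simp)
        rw [hd.deriv]
        have := hbound x hxm
        linarith
    -- so Ω is bounded on [T₀, 0), contradicting divergence
    set B : ℝ := Real.log (Ω T₀) - K * T₀ with hBdef
    have hboundΩ : ∀ T ∈ Set.Ico T₀ (0:ℝ), Ω T ≤ Real.exp B := by
      intro T hT
      have h1 : Real.log (Ω T) - K * T ≤ B := hhanti hT₀mem hT hT.1
      have hO := hpos T (hwin T hT).2
      have hKT : K * T ≤ 0 := mul_nonpos_of_nonneg_of_nonpos hK.le (le_of_lt hT.2)
      have hlog : Real.log (Ω T) ≤ B := by linarith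
      calc Ω T = Real.exp (Real.log (Ω T)) := (Real.exp_log hO).symm
        _ ≤ Real.exp B := Real.exp_le_exp.2 hlog
    have : ∃ T, (Real.exp B + 1 ≤ Ω T) ∧ T ∈ Set.Ico T₀ (0:ℝ) :=
      ((hdiv.eventually_ge_atTop (Real.exp B + 1)).and
        (eventually_mem_set.2 (Ico_mem_nhdsLT_of_mem ⟨hT₀, le_refl _⟩))).exists
    obtain ⟨T, h1, h2⟩ := this
    have := hboundΩ T h2
    linarith [Real.exp_pos B]
  have hlam_ne_bot : lam ≠ ⊥ := by
    have hb : (⊥ : EReal) < 1 := EReal.coe_one ▸ EReal.bot_lt_coe 1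
    exact (hb.trans_le hge1).ne'
  rcases lt_or_gt_of_ne hlam2 with hcase | hcase
  · -- lam < 2 : lam is a real number in [1,2)
    have hlam_ne_top : lam ≠ ⊤ := fun h => by rw [h] at hcase; exact absurd hcase (by simp)
    lift lam to ℝ using ⟨hlam_ne_top, hlam_ne_bot⟩ with l hl
    have h2e : ((2:ℝ):EReal) = (2:EReal) := by norm_cast
    have hl2 : l < 2 := EReal.coe_lt_coe_iff.1 (h2e ▸ hcase)
    have hLtend : Tendsto L (𝓝[<] (0:ℝ)) (𝓝 l) := EReal.tendsto_coe.1 hlam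
    set r : ℝ := (l + 2) / 2 with hrdef
    have hlr : l < r := by rw [hrdef]; linarith
    have hr2 : r < 2 := by rw [hrdef]; linarith
    have hev : ∀ᶠ T in 𝓝[<] (0:ℝ), L T < r := hLtend.eventually_lt_const hlr
    obtain ⟨T₀, hT₀, hwin⟩ := extract_window (hev.and hIco)
    -- M is antitone on [T₀, 0)
    have hManti : AntitoneOn M (Set.Ico T₀ 0) := by
      apply antitoneOn_of_deriv_nonpos (convex_Ico _ _)
      · intro x hx
        have hx' := (hwin x hx).2
        exact ((hasDerivAt_M Ω Ω' Ω'' (hderiv x hx') (hderiv' x hx')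
          (hpos x hx')).continuousAt).continuousWithinAt
      · rw [interior_Ico]
        intro x hx
        have hx' := (hwin x ⟨hx.1.le, hx.2⟩).2
        exact ((hasDerivAt_M Ω Ω' Ω'' (hderiv x hx') (hderiv' x hx')
          (hpos x hx')).differentiableAt).differentiableWithinAt
      · rw [interior_Ico]
        intro x hx
        have hxm : x ∈ Set.Ico T₀ (0:ℝ) := ⟨hx.1.le, hx.2⟩
        have hx' := (hwin x hxm).2
        have hd := hasDerivAt_M Ω Ω' Ω'' (hderiv x hx') (hderiv' x hx') (hpos x hx')
        rw [hd.deriv]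
        have hLx : L x < r := (hwin x hxm).1
        have hO := hpos x hx'
        have hO' := hpos' x hx'
        have hnum : Ω'' x * Ω x < r * Ω' x ^ 2 := by
          have := (div_lt_iff₀ (by positivity : (0:ℝ) < Ω' x ^ 2)).1 hLx
          linarith
        apply div_nonpos_of_nonpos_of_nonneg _ (by positivity)
        nlinarith
    have hne : (Set.Ioo T₀ (0:ℝ)).Nonempty := ⟨T₀ / 2, by constructor <;> linarith⟩
    have hbdd : BddBelow (M '' Set.Ioo T₀ 0) := by
      refine ⟨0, fun y hy => ?_⟩
      obtain ⟨x, hx, rfl⟩ := hy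
      have hx' := (hwin x ⟨hx.1.le, hx.2⟩).2
      have h1 := hpos x hx'
      have h2 := hpos' x hx'
      show 0 ≤ Ω' x / Ω x ^ 2
      positivity
    set μ : ℝ := sInf (M '' Set.Ioo T₀ 0) with hμdef
    have hMtend : Tendsto M (𝓝[<] (0:ℝ)) (𝓝 μ) :=
      (hManti.mono Set.Ioo_subset_Ico_self).tendsto_nhdsWithin_Ioo_left hne hbdd
    have hμ0 : 0 ≤ μ := le_csInf (hne.image M) (fun y hy => by
      obtain ⟨x, hx, rfl⟩ := hy
      have hx' := (hwin x ⟨hx.1.le, hx.2⟩).2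
      have h1 := hpos x hx'
      have h2 := hpos' x hx'
      show 0 ≤ Ω' x / Ω x ^ 2
      positivity)
    refine ⟨((l ^ 2 * μ ^ 4 : ℝ) : EReal), ?_, ?_, ?_, ?_⟩
    · exact EReal.tendsto_coe.2 ((hLtend.pow 2).mul (hMtend.pow 4))
    · exact EReal.coe_nonneg.2 (by positivity)
    · intro h; exact absurd (h.trans hcase) (lt_irrefl _)
    · intro _; exact EReal.coe_lt_top _
  · -- 2 < lam
    obtain ⟨r, hr2, hrlam⟩ := EReal.exists_between_coe_real hcase
    have h2e : ((2:ℝ):EReal) = (2:EReal) := by norm_cast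
    have hr2' : (2:ℝ) < r := EReal.coe_lt_coe_iff.1 (h2e ▸ hr2)
    have hev : ∀ᶠ T in 𝓝[<] (0:ℝ), r < L T := by
      filter_upwards [hlam.eventually_const_lt hrlam] with T hT
      exact EReal.coe_lt_coe_iff.1 hT
    obtain ⟨T₀, hT₀, hwin⟩ := extract_window (hev.and hIco)
    -- M is monotone on [T₀, 0)
    have hMmono : MonotoneOn M (Set.Ico T₀ 0) := by
      apply monotoneOn_of_deriv_nonneg (convex_Ico _ _)
      · intro x hx
        have hx' := (hwin x hx).2
        exact ((hasDerivAt_M Ω Ω' Ω'' (hderiv x hx') (hderiv' x hx')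
          (hpos x hx')).continuousAt).continuousWithinAt
      · rw [interior_Ico]
        intro x hx
        have hx' := (hwin x ⟨hx.1.le, hx.2⟩).2
        exact ((hasDerivAt_M Ω Ω' Ω'' (hderiv x hx') (hderiv' x hx')
          (hpos x hx')).differentiableAt).differentiableWithinAt
      · rw [interior_Ico]
        intro x hx
        have hxm : x ∈ Set.Ico T₀ (0:ℝ) := ⟨hx.1.le, hx.2⟩
        have hx' := (hwin x hxm).2
        have hd := hasDerivAt_M Ω Ω' Ω'' (hderiv x hx') (hderiv' x hx') (hpos x hx')
        rw [hd.deriv]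
        have hLx : r < L x := (hwin x hxm).1
        have hO := hpos x hx'
        have hO' := hpos' x hx'
        have hnum : r * Ω' x ^ 2 < Ω'' x * Ω x := by
          have := (lt_div_iff₀ (by positivity : (0:ℝ) < Ω' x ^ 2)).1 hLx
          linarith
        apply div_nonneg _ (by positivity)
        nlinarith
    have hne : (Set.Ioo T₀ (0:ℝ)).Nonempty := ⟨T₀ / 2, by constructor <;> linarith⟩
    have hmid : T₀ / 2 ∈ Set.Ioo T₀ (0:ℝ) := ⟨by linarith, by linarith⟩
    have hMmidpos : 0 < M (T₀ / 2) := by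
      have hx' := (hwin (T₀ / 2) ⟨hmid.1.le, hmid.2⟩).2
      have h1 := hpos (T₀ / 2) hx'
      have h2 := hpos' (T₀ / 2) hx'
      show 0 < Ω' (T₀ / 2) / Ω (T₀ / 2) ^ 2
      positivity
    by_cases hbdd : BddAbove (M '' Set.Ioo T₀ 0)
    · -- M has a finite positive limit μ
      set μ : ℝ := sSup (M '' Set.Ioo T₀ 0) with hμdef
      have hMtend : Tendsto M (𝓝[<] (0:ℝ)) (𝓝 μ) :=
        (hMmono.mono Set.Ioo_subset_Ico_self).tendsto_nhdsWithin_Ioo_left hne hbdd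
      have hμpos : 0 < μ :=
        hMmidpos.trans_le (le_csSup hbdd (Set.mem_image_of_mem M hmid))
      by_cases htop : lam = ⊤
      · -- L → ∞, μ finite positive ⇒ N → ∞
        have hLtop : Tendsto L (𝓝[<] (0:ℝ)) atTop := by
          rw [tendsto_atTop]
          intro b
          have := (EReal.tendsto_nhds_top_iff_real.1 (htop ▸ hlam)) b
          filter_upwards [this] with T hT
          exact (EReal.coe_lt_coe_iff.1 hT).le
        have hM4 : Tendsto (fun T => M T ^ 4) (𝓝[<] (0:ℝ)) (𝓝 (μ ^ 4)) := hMtend.pow 4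
        have hμ4 : (0:ℝ) < μ ^ 4 := pow_pos hμpos 4
        have hNtop : Tendsto (fun T => L T ^ 2 * M T ^ 4) (𝓝[<] (0:ℝ)) atTop := by
          apply tendsto_atTop_mono' _ _ ((hLtop.atTop_mul_const (half_pos hμ4)))
          filter_upwards [hLtop.eventually_ge_atTop 1,
            hM4.eventually_const_lt (half_lt_self hμ4)] with T h1 h2
          have hL0 : (0:ℝ) < L T := by linarith
          calc L T * (μ ^ 4 / 2) ≤ L T * M T ^ 4 :=
                mul_le_mul_of_nonneg_left (by linarith) hL0.le
            _ ≤ L T ^ 2 * M T ^ 4 :=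
                mul_le_mul_of_nonneg_right (by nlinarith) (by positivity)
        refine ⟨⊤, ?_, le_top, fun _ => ?_, fun h => absurd (h.trans hcase) (lt_irrefl _)⟩
        · rw [EReal.tendsto_nhds_top_iff_real]
          intro x
          filter_upwards [hNtop.eventually_gt_atTop x] with T hT
          exact EReal.coe_lt_coe_iff.2 hT
        · exact EReal.zero_lt_top
      · -- lam finite : real limit l²μ⁴ > 0
        lift lam to ℝ using ⟨htop, hlam_ne_bot⟩ with l hl
        have hLtend : Tendsto L (𝓝[<] (0:ℝ)) (𝓝 l) := EReal.tendsto_coe.1 hlam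
        have hl2 : (2:ℝ) < l := EReal.coe_lt_coe_iff.1 (h2e ▸ hcase)
        refine ⟨((l ^ 2 * μ ^ 4 : ℝ) : EReal), ?_, ?_, ?_, ?_⟩
        · exact EReal.tendsto_coe.2 ((hLtend.pow 2).mul (hMtend.pow 4))
        · exact EReal.coe_nonneg.2 (by positivity)
        · intro _
          exact EReal.coe_pos.2 (mul_pos (by nlinarith) (pow_pos hμpos 4))
        · intro h; exact absurd (h.trans hcase) (lt_irrefl _)
    · -- M → ∞ ⇒ N → ∞
      have hMtop : Tendsto M (𝓝[<] (0:ℝ)) atTop := by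
        rw [tendsto_atTop]
        intro b
        obtain ⟨y, hy, hby⟩ := not_bddAbove_iff.1 hbdd b
        obtain ⟨T₁, hT₁, rfl⟩ := hy
        filter_upwards [eventually_mem_set.2 (Ioo_mem_nhdsLT hT₁.2)] with T hT
        exact hby.le.trans (hMmono ⟨hT₁.1.le, hT₁.2⟩ ⟨(hT₁.1.trans hT.1).le, hT.2⟩ hT.1.le)
      have hNtop : Tendsto (fun T => L T ^ 2 * M T ^ 4) (𝓝[<] (0:ℝ)) atTop := by
        apply tendsto_atTop_mono' _ _ hMtop
        filter_upwards [hMtop.eventually_ge_atTop 1,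
          eventually_mem_set.2 (Ico_mem_nhdsLT_of_mem ⟨hT₀, le_refl _⟩)] with T h1 h2
        have hLx : r < L T := (hwin T h2).1
        have h4 : M T ≤ M T ^ 4 := le_self_pow₀ h1 (by norm_num)
        have h5 : (1:ℝ) ≤ L T ^ 2 := by nlinarith
        have h6 : (0:ℝ) ≤ M T ^ 4 := by positivity
        nlinarith
      refine ⟨⊤, ?_, le_top, fun _ => ?_, fun h => absurd (h.trans hcase) (lt_irrefl _)⟩
      · rw [EReal.tendsto_nhds_top_iff_real]
        intro x
        filter_upwards [hNtop.eventually_gt_atTop x] with T hT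
        exact EReal.coe_lt_coe_iff.2 hT
      · exact EReal.zero_lt_top
end

section
/- Let Ω be continuous on [-c,0], positive, strictly monotonically decreasing and C² on [-c,0) with Ω' < 0, Ω(0) = 0, and suppose λ = lim_{T→0⁻} Ω''Ω/(Ω')² exists with λ ∉ {0, 1}. Then N(T) = L(T)²·M(T)⁴ → +∞ as T → 0⁻, where L = Ω''Ω/(Ω')² and M = Ω'/Ω². -/
open Filter Topology Set

/-- A function with nonnegative derivative on `Ioo t₀ 0` (and derivative existing on
`Ico t₀ 0`) is monotone on `Ico t₀ 0`. -/
lemma mono_aux_B10 {f f' : ℝ → ℝ} {t₀ : ℝ}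
    (hd : ∀ T ∈ Set.Ico t₀ (0:ℝ), HasDerivAt f (f' T) T)
    (hnn : ∀ T ∈ Set.Ioo t₀ (0:ℝ), 0 ≤ f' T) :
    MonotoneOn f (Set.Ico t₀ 0) := by
  apply monotoneOn_of_deriv_nonneg (convex_Ico _ _)
  · exact fun x hx => (hd x hx).continuousAt.continuousWithinAt
  · intro x hx
    rw [interior_Ico] at hx
    exact ((hd x (Set.Ioo_subset_Ico_self hx)).differentiableAt).differentiableWithinAt
  · intro x hx
    rw [interior_Ico] at hx
    rw [(hd x (Set.Ioo_subset_Ico_self hx)).deriv]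
    exact hnn x hx

/-- Lemma B.10: under the vanishing-Ω hypotheses with λ ∉ {0,1},
N = L²·M⁴ → +∞ as T → 0⁻. -/
theorem N_tendsto_atTop_of_vanishing
    (c : ℝ) (hc : 0 < c) (Ω Ω' Ω'' : ℝ → ℝ)
    (hcontΩ : ContinuousOn Ω (Set.Icc (-c) 0))
    (hderiv : ∀ T ∈ Set.Ico (-c) (0:ℝ), HasDerivAt Ω (Ω' T) T)
    (hderiv' : ∀ T ∈ Set.Ico (-c) (0:ℝ), HasDerivAt Ω' (Ω'' T) T)
    (hcont : ContinuousOn Ω'' (Set.Ico (-c) 0))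
    (hanti : StrictAntiOn Ω (Set.Ico (-c) 0))
    (hpos : ∀ T ∈ Set.Ico (-c) (0:ℝ), 0 < Ω T)
    (hneg' : ∀ T ∈ Set.Ico (-c) (0:ℝ), Ω' T < 0)
    (hzero : Ω 0 = 0)
    (lam : EReal)
    (hlam : Tendsto (fun T => ((Ω'' T * Ω T / (Ω' T) ^ 2 : ℝ) : EReal))
      (𝓝[<] (0:ℝ)) (𝓝 lam))
    (hlam0 : lam ≠ 0) (hlam1 : lam ≠ 1) :
    Tendsto (fun T => (Ω'' T * Ω T / (Ω' T) ^ 2) ^ 2 * (Ω' T / (Ω T) ^ 2) ^ 4)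
      (𝓝[<] (0:ℝ)) atTop := by
  have hc0 : (-c : ℝ) < 0 := by linarith
  have hIooF : Set.Ioo (-c) (0:ℝ) ∈ 𝓝[<] (0:ℝ) := by
    rw [← nhdsWithin_Ioo_eq_nhdsLT hc0]; exact self_mem_nhdsWithin
  have hmem : ∀ᶠ T in 𝓝[<] (0:ℝ), T ∈ Set.Ioo (-c) 0 := hIooF
  -- Ω tends to 0 from the left
  have hΩ0 : Tendsto Ω (𝓝[<] (0:ℝ)) (𝓝 0) := by
    have h1 : Tendsto Ω (𝓝[Set.Icc (-c) 0] (0:ℝ)) (𝓝 (Ω 0)) :=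
      hcontΩ 0 ⟨le_of_lt hc0, le_refl 0⟩
    rw [hzero] at h1
    refine h1.mono_left ?_
    rw [← nhdsWithin_Ioo_eq_nhdsLT hc0]
    exact nhdsWithin_mono _ Set.Ioo_subset_Icc_self
  rcases lt_or_gt_of_ne hlam1 with hlt | hgt
  · -- Case lam < 1 : the real proof
    -- eventually L < 1
    have ev1 : ∀ᶠ T in 𝓝[<] (0:ℝ), Ω'' T * Ω T / (Ω' T) ^ 2 < 1 := by
      have h := hlam.eventually_mem (Iio_mem_nhds hlt)
      filter_upwards [h] with T hT
      have : ((Ω'' T * Ω T / (Ω' T) ^ 2 : ℝ) : EReal) < ((1:ℝ) : EReal) := by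
        simpa using hT
      exact_mod_cast this
    -- ε lower bound on L²
    have hL2 : ∃ ε > (0:ℝ), ∀ᶠ T in 𝓝[<] (0:ℝ),
        ε ≤ (Ω'' T * Ω T / (Ω' T) ^ 2) ^ 2 := by
      induction lam with
      | bot =>
        refine ⟨1, one_pos, ?_⟩
        have h := EReal.tendsto_nhds_bot_iff_real.mp hlam (-1)
        filter_upwards [h] with T hT
        have h2 : Ω'' T * Ω T / (Ω' T) ^ 2 < -1 := by exact_mod_cast hT
        nlinarith
      | coe l =>
        have hl0 : l ≠ 0 := by
          intro h; apply hlam0; rw [h]; rfl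
        have hreal : Tendsto (fun T => Ω'' T * Ω T / (Ω' T) ^ 2)
            (𝓝[<] (0:ℝ)) (𝓝 l) := EReal.tendsto_coe.mp hlam
        refine ⟨l ^ 2 / 4, by positivity, ?_⟩
        have h := hreal.eventually_mem (Metric.ball_mem_nhds l (half_pos (abs_pos.mpr hl0)))
        filter_upwards [h] with T hT
        rw [Metric.mem_ball, Real.dist_eq] at hT
        have h1 : |l| - |Ω'' T * Ω T / (Ω' T) ^ 2| ≤ |Ω'' T * Ω T / (Ω' T) ^ 2 - l| := by
          have := abs_sub_abs_le_abs_sub l (Ω'' T * Ω T / (Ω' T) ^ 2)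
          rwa [abs_sub_comm] at this
        have h2 : |l| / 2 ≤ |Ω'' T * Ω T / (Ω' T) ^ 2| := by linarith
        nlinarith [sq_abs (Ω'' T * Ω T / (Ω' T) ^ 2), sq_abs l, abs_nonneg l]
      | top => exact absurd hlt (by simp)
    -- extract an interval on which L < 1 and domain conditions hold
    have key : {T | Ω'' T * Ω T / (Ω' T) ^ 2 < 1 ∧ T ∈ Set.Ioo (-c) 0}
        ∈ 𝓝[<] (0:ℝ) := (ev1.and hmem)
    rw [mem_nhdsLT_iff_exists_Ioo_subset] at key
    obtain ⟨a, ha, hsub⟩ := key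
    rw [Set.mem_Iio] at ha
    set t₀ : ℝ := a / 2 with ht₀def
    have hat₀ : a < t₀ := by rw [ht₀def]; linarith
    have ht₀0 : t₀ < 0 := by rw [ht₀def]; linarith
    have hprop : ∀ T ∈ Set.Ico t₀ (0:ℝ),
        Ω'' T * Ω T / (Ω' T) ^ 2 < 1 ∧ T ∈ Set.Ioo (-c) 0 := by
      intro T hT
      exact hsub ⟨lt_of_lt_of_le hat₀ hT.1, hT.2⟩
    have hIco : ∀ T ∈ Set.Ico t₀ (0:ℝ), T ∈ Set.Ico (-c) (0:ℝ) := by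
      intro T hT
      exact ⟨le_of_lt (hprop T hT).2.1, hT.2⟩
    -- f = Ω/Ω' is monotone on [t₀, 0)
    have hfd : ∀ T ∈ Set.Ico t₀ (0:ℝ), HasDerivAt (fun y => Ω y / Ω' y)
        ((Ω' T * Ω' T - Ω T * Ω'' T) / (Ω' T) ^ 2) T := by
      intro T hT
      exact (hderiv T (hIco T hT)).div (hderiv' T (hIco T hT))
        (ne_of_lt (hneg' T (hIco T hT)))
    have hmono : MonotoneOn (fun y => Ω y / Ω' y) (Set.Ico t₀ 0) := by
      apply mono_aux_B10 hfd
      intro T hT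
      have hT' := Set.Ioo_subset_Ico_self hT
      have h1 := (hprop T hT').1
      have h2 := hpos T (hIco T hT')
      have h3 := hneg' T (hIco T hT')
      have hsq : (0:ℝ) < (Ω' T) ^ 2 := by nlinarith
      have h4 : Ω'' T * Ω T < (Ω' T) ^ 2 := (div_lt_one hsq).mp h1
      apply div_nonneg _ (le_of_lt hsq)
      nlinarith
    have ht₀mem : t₀ ∈ Set.Ico t₀ (0:ℝ) := ⟨le_refl _, ht₀0⟩
    have hft₀ : Ω t₀ / Ω' t₀ < 0 :=
      div_neg_of_pos_of_neg (hpos t₀ (hIco t₀ ht₀mem)) (hneg' t₀ (hIco t₀ ht₀mem))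
    -- Ω²/Ω' → 0
    have hIooT : Set.Ioo t₀ (0:ℝ) ∈ 𝓝[<] (0:ℝ) := by
      rw [← nhdsWithin_Ioo_eq_nhdsLT ht₀0]; exact self_mem_nhdsWithin
    have hq0 : Tendsto (fun T => (Ω T) ^ 2 / Ω' T) (𝓝[<] (0:ℝ)) (𝓝 0) := by
      have hneg0 : Tendsto (fun T => -((Ω T) ^ 2 / Ω' T)) (𝓝[<] (0:ℝ)) (𝓝 0) := by
        apply squeeze_zero' (t₀ := 𝓝[<] (0:ℝ))
          (g := fun T => (-(Ω t₀ / Ω' t₀)) * Ω T)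
        · filter_upwards [hIooT] with T hT
          have hT' := Set.Ioo_subset_Ico_self hT
          have h2 := hpos T (hIco T hT')
          have h3 := hneg' T (hIco T hT')
          have : (Ω T) ^ 2 / Ω' T < 0 := by
            apply div_neg_of_pos_of_neg (by positivity) h3
          linarith
        · filter_upwards [hIooT] with T hT
          have hT' := Set.Ioo_subset_Ico_self hT
          have h2 := hpos T (hIco T hT')
          have hle : Ω t₀ / Ω' t₀ ≤ Ω T / Ω' T := hmono ht₀mem hT' (le_of_lt hT.1)
          have heq : (Ω T) ^ 2 / Ω' T = Ω T * (Ω T / Ω' T) := by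
            rw [sq, mul_div_assoc]
          rw [heq]
          nlinarith
        · have := hΩ0.const_mul (-(Ω t₀ / Ω' t₀))
          simpa using this
      have := hneg0.neg
      simpa using this
    -- (Ω²/Ω')⁴ → 0⁺, hence M⁴ → ∞
    have hq4 : Tendsto (fun T => ((Ω T) ^ 2 / Ω' T) ^ 4) (𝓝[<] (0:ℝ)) (𝓝[>] (0:ℝ)) := by
      rw [tendsto_nhdsWithin_iff]
      constructor
      · have := hq0.pow 4
        simpa using this
      · filter_upwards [hIooT] with T hT
        have hT' := Set.Ioo_subset_Ico_self hT
        have h2 := hpos T (hIco T hT')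
        have h3 := hneg' T (hIco T hT')
        have hqneg : (Ω T) ^ 2 / Ω' T < 0 := div_neg_of_pos_of_neg (by positivity) h3
        have h4 : ((Ω T) ^ 2 / Ω' T) ^ 4 = (((Ω T) ^ 2 / Ω' T) ^ 2) ^ 2 := by ring
        rw [Set.mem_Ioi, h4]
        exact pow_pos (by nlinarith) 2
    have hM4 : Tendsto (fun T => (Ω' T / (Ω T) ^ 2) ^ 4) (𝓝[<] (0:ℝ)) atTop := by
      have h := hq4.inv_tendsto_nhdsGT_zero
      apply h.congr
      intro T
      show (((Ω T) ^ 2 / Ω' T) ^ 4)⁻¹ = _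
      rw [← inv_pow, inv_div]
    -- conclude
    obtain ⟨ε, hε, hevL⟩ := hL2
    apply tendsto_atTop_mono' (𝓝[<] (0:ℝ)) _ (hM4.const_mul_atTop hε)
    filter_upwards [hevL] with T hT
    have hnn : (0:ℝ) ≤ (Ω' T / (Ω T) ^ 2) ^ 4 := by positivity
    exact mul_le_mul_of_nonneg_right hT hnn
  · -- Case 1 < lam : impossible (Ω would stay bounded away from 0)
    exfalso
    have ev1 : ∀ᶠ T in 𝓝[<] (0:ℝ), 1 < Ω'' T * Ω T / (Ω' T) ^ 2 := by
      have h := hlam.eventually_mem (Ioi_mem_nhds hgt)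
      filter_upwards [h] with T hT
      have : ((1:ℝ) : EReal) < ((Ω'' T * Ω T / (Ω' T) ^ 2 : ℝ) : EReal) := by
        simpa using hT
      exact_mod_cast this
    have key : {T | 1 < Ω'' T * Ω T / (Ω' T) ^ 2 ∧ T ∈ Set.Ioo (-c) 0}
        ∈ 𝓝[<] (0:ℝ) := (ev1.and hmem)
    rw [mem_nhdsLT_iff_exists_Ioo_subset] at key
    obtain ⟨a, ha, hsub⟩ := key
    rw [Set.mem_Iio] at ha
    set t₀ : ℝ := a / 2 with ht₀def
    have hat₀ : a < t₀ := by rw [ht₀def]; linarith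
    have ht₀0 : t₀ < 0 := by rw [ht₀def]; linarith
    have hprop : ∀ T ∈ Set.Ico t₀ (0:ℝ),
        1 < Ω'' T * Ω T / (Ω' T) ^ 2 ∧ T ∈ Set.Ioo (-c) 0 := by
      intro T hT
      exact hsub ⟨lt_of_lt_of_le hat₀ hT.1, hT.2⟩
    have hIco : ∀ T ∈ Set.Ico t₀ (0:ℝ), T ∈ Set.Ico (-c) (0:ℝ) := by
      intro T hT
      exact ⟨le_of_lt (hprop T hT).2.1, hT.2⟩
    -- g = Ω'/Ω is monotone on [t₀,0)
    have hgd : ∀ T ∈ Set.Ico t₀ (0:ℝ), HasDerivAt (fun y => Ω' y / Ω y)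
        ((Ω'' T * Ω T - Ω' T * Ω' T) / (Ω T) ^ 2) T := by
      intro T hT
      exact (hderiv' T (hIco T hT)).div (hderiv T (hIco T hT))
        (ne_of_gt (hpos T (hIco T hT)))
    have hmono : MonotoneOn (fun y => Ω' y / Ω y) (Set.Ico t₀ 0) := by
      apply mono_aux_B10 hgd
      intro T hT
      have hT' := Set.Ioo_subset_Ico_self hT
      have h1 := (hprop T hT').1
      have h2 := hpos T (hIco T hT')
      have h3 := hneg' T (hIco T hT')
      have hsq : (0:ℝ) < (Ω' T) ^ 2 := by nlinarith
      have h4 : (Ω' T) ^ 2 < Ω'' T * Ω T := (one_lt_div hsq).mp h1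
      apply div_nonneg _ (by nlinarith)
      nlinarith
    have ht₀mem : t₀ ∈ Set.Ico t₀ (0:ℝ) := ⟨le_refl _, ht₀0⟩
    set K : ℝ := -(Ω' t₀ / Ω t₀) with hKdef
    have hK : 0 < K := by
      rw [hKdef]
      have := div_neg_of_pos_of_neg (hpos t₀ (hIco t₀ ht₀mem)) (hneg' t₀ (hIco t₀ ht₀mem))
      -- wrong orientation: Ω'/Ω is neg/pos
      have h' : Ω' t₀ / Ω t₀ < 0 :=
        div_neg_of_neg_of_pos (hneg' t₀ (hIco t₀ ht₀mem)) (hpos t₀ (hIco t₀ ht₀mem))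
      linarith
    -- h = Ω·exp(K·) is monotone on [t₀,0)
    have hhd : ∀ T ∈ Set.Ico t₀ (0:ℝ),
        HasDerivAt (fun y => Ω y * Real.exp (K * y))
          (Ω' T * Real.exp (K * T) + Ω T * (Real.exp (K * T) * K)) T := by
      intro T hT
      have he : HasDerivAt (fun y => Real.exp (K * y)) (Real.exp (K * T) * K) T := by
        have := ((hasDerivAt_id T).const_mul K).exp
        simpa using this
      exact (hderiv T (hIco T hT)).mul he
    have hhmono : MonotoneOn (fun y => Ω y * Real.exp (K * y)) (Set.Ico t₀ 0) := by
      apply mono_aux_B10 hhd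
      intro T hT
      have hT' := Set.Ioo_subset_Ico_self hT
      have h2 := hpos T (hIco T hT')
      have hle : Ω' t₀ / Ω t₀ ≤ Ω' T / Ω T := hmono ht₀mem hT' (le_of_lt hT.1)
      have h5 : Ω' t₀ / Ω t₀ * Ω T ≤ Ω' T := (le_div_iff₀ h2).mp hle
      have h6 : 0 ≤ Ω' T + K * Ω T := by rw [hKdef]; nlinarith
      have hexp := (Real.exp_pos (K * T)).le
      nlinarith
    -- hence Ω is bounded below by ε > 0 on [t₀,0)
    set ε : ℝ := Ω t₀ * Real.exp (K * t₀) with hεdef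
    have hεpos : 0 < ε := by
      rw [hεdef]
      exact mul_pos (hpos t₀ (hIco t₀ ht₀mem)) (Real.exp_pos _)
    have hlb : ∀ T ∈ Set.Ico t₀ (0:ℝ), ε ≤ Ω T := by
      intro T hT
      have h1 : ε ≤ Ω T * Real.exp (K * T) := hhmono ht₀mem hT hT.1
      have h2 : Real.exp (K * T) ≤ 1 := Real.exp_le_one_iff.mpr (by nlinarith [hT.2, hK])
      have h3 := hpos T (hIco T hT)
      nlinarith
    -- contradiction with Ω → 0
    have hev2 : ∀ᶠ T in 𝓝[<] (0:ℝ), Ω T < ε := hΩ0.eventually_mem (Iio_mem_nhds hεpos)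
    have hIooT : Set.Ioo t₀ (0:ℝ) ∈ 𝓝[<] (0:ℝ) := by
      rw [← nhdsWithin_Ioo_eq_nhdsLT ht₀0]; exact self_mem_nhdsWithin
    obtain ⟨T, hT1, hT2⟩ := (hev2.and hIooT).exists
    exact absurd (hlb T (Set.Ioo_subset_Ico_self hT2)) (not_le.mpr hT1)
end

section
/- If Ω is positive, strictly monotonically increasing and C² on (0, c] (c > 0), continuous on [0,c] with Ω(0) = 0, and λ = lim_{T→0⁺} Ω''Ω/(Ω')² exists, then λ ≤ 1. -/
open Filter Topology

/-- Time-reversed variant (Remark B.3): if Ω is continuous on [0,c], positive,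
strictly increasing and C² on (0,c] with Ω(0) = 0, and
λ = lim_{T→0⁺} Ω''Ω/(Ω')² exists in the extended reals, then λ ≤ 1. -/
theorem lambda_le_one_of_vanishing_future
    (c : ℝ) (hc : 0 < c) (Ω Ω' Ω'' : ℝ → ℝ)
    (hcontΩ : ContinuousOn Ω (Set.Icc 0 c))
    (hderiv : ∀ T ∈ Set.Ioc (0:ℝ) c, HasDerivAt Ω (Ω' T) T)
    (hderiv' : ∀ T ∈ Set.Ioc (0:ℝ) c, HasDerivAt Ω' (Ω'' T) T)
    (hcont : ContinuousOn Ω'' (Set.Ioc 0 c))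
    (hmono : StrictMonoOn Ω (Set.Ioc 0 c))
    (hpos : ∀ T ∈ Set.Ioc (0:ℝ) c, 0 < Ω T)
    (hpos' : ∀ T ∈ Set.Ioc (0:ℝ) c, 0 < Ω' T)
    (hzero : Ω 0 = 0)
    (lam : EReal)
    (hlam : Tendsto (fun T => ((Ω'' T * Ω T / (Ω' T) ^ 2 : ℝ) : EReal))
      (𝓝[>] (0:ℝ)) (𝓝 lam)) :
    lam ≤ 1 := by
  by_contra hcon
  push_neg at hcon
  obtain ⟨r, hr1, hrlam⟩ := EReal.lt_iff_exists_real_btwn.mp hcon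
  have hr1' : (1:ℝ) < r := by exact_mod_cast hr1
  -- eventually the ratio exceeds r
  have hev : ∀ᶠ T in 𝓝[>] (0:ℝ), r < Ω'' T * Ω T / (Ω' T) ^ 2 := by
    have h1 : ∀ᶠ x in 𝓝 lam, (r : EReal) < x := eventually_gt_nhds hrlam
    filter_upwards [hlam.eventually h1] with T hT
    exact_mod_cast hT
  obtain ⟨ε, hε, hεsub⟩ := mem_nhdsGT_iff_exists_Ioc_subset.mp hev
  set ε₀ : ℝ := min ε c with hε₀def
  have hε₀0 : 0 < ε₀ := lt_min hε hc
  have hε₀c : ε₀ ≤ c := min_le_right _ _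
  have hsub : Set.Ioc (0:ℝ) ε₀ ⊆ Set.Ioc 0 c := Set.Ioc_subset_Ioc_right hε₀c
  have hLr : ∀ T ∈ Set.Ioc (0:ℝ) ε₀, r < Ω'' T * Ω T / (Ω' T) ^ 2 := by
    intro T hT
    exact hεsub ⟨hT.1, hT.2.trans (min_le_left _ _)⟩
  set g : ℝ → ℝ := fun T => Ω T / Ω' T with hgdef
  set G' : ℝ → ℝ := fun T => (Ω' T * Ω' T - Ω T * Ω'' T) / Ω' T ^ 2 with hG'def
  have hgderiv : ∀ T ∈ Set.Ioc (0:ℝ) ε₀, HasDerivAt g (G' T) T := fun T hT =>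
    (hderiv T (hsub hT)).div (hderiv' T (hsub hT)) (ne_of_gt (hpos' T (hsub hT)))
  have hG'neg : ∀ T ∈ Set.Ioc (0:ℝ) ε₀, G' T ≤ 0 := by
    intro T hT
    have h1 := hLr T hT
    have h2 : (0:ℝ) < Ω' T ^ 2 := pow_pos (hpos' T (hsub hT)) 2
    have h3 : r * Ω' T ^ 2 < Ω'' T * Ω T := (lt_div_iff₀ h2).mp h1
    have h4 : Ω' T * Ω' T - Ω T * Ω'' T ≤ 0 := by nlinarith
    exact div_nonpos_of_nonpos_of_nonneg h4 h2.le
  -- g is at least g ε₀ on the interval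
  have hgmono : ∀ T ∈ Set.Ioc (0:ℝ) ε₀, g ε₀ ≤ g T := by
    intro T hT
    rcases eq_or_lt_of_le hT.2 with heq | hlt
    · rw [heq]
    · obtain ⟨x, hx, hxeq⟩ := exists_hasDerivAt_eq_slope g G' hlt
        (fun y hy => (hgderiv y ⟨hT.1.trans_le hy.1, hy.2⟩).continuousAt.continuousWithinAt)
        (fun y hy => hgderiv y ⟨hT.1.trans hy.1, hy.2.le⟩)
      have hG : G' x ≤ 0 := hG'neg x ⟨hT.1.trans hx.1, hx.2.le⟩
      rw [hxeq] at hG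
      have hden : (0:ℝ) < ε₀ - T := sub_pos.mpr hlt
      have := (div_nonpos_iff.mp hG)
      rcases this with ⟨h1, h2⟩ | ⟨h1, h2⟩
      · linarith
      · linarith
  have hgε₀pos : 0 < g ε₀ :=
    div_pos (hpos ε₀ ⟨hε₀0, hε₀c⟩) (hpos' ε₀ ⟨hε₀0, hε₀c⟩)
  set M : ℝ := Ω' ε₀ / Ω ε₀ with hMdef
  have hMpos : 0 < M := div_pos (hpos' ε₀ ⟨hε₀0, hε₀c⟩) (hpos ε₀ ⟨hε₀0, hε₀c⟩)
  have hratio : ∀ x ∈ Set.Ioc (0:ℝ) ε₀, Ω' x / Ω x ≤ M := by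
    intro x hx
    have h1 : g ε₀ ≤ g x := hgmono x hx
    have h2 : 1 / g x ≤ 1 / g ε₀ := one_div_le_one_div_of_le hgε₀pos h1
    have h3 : 1 / g x = Ω' x / Ω x := one_div_div _ _
    have h4 : 1 / g ε₀ = M := one_div_div _ _
    rw [h3, h4] at h2
    exact h2
  -- log bound
  have hlog : ∀ T ∈ Set.Ioc (0:ℝ) ε₀, Real.log (Ω ε₀) - M * ε₀ ≤ Real.log (Ω T) := by
    intro T hT
    rcases eq_or_lt_of_le hT.2 with heq | hlt
    · rw [heq]; nlinarith
    · obtain ⟨x, hx, hxeq⟩ := exists_hasDerivAt_eq_slope (fun y => Real.log (Ω y))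
        (fun y => Ω' y / Ω y) hlt
        (fun y hy => ((hderiv y (hsub ⟨hT.1.trans_le hy.1, hy.2⟩)).log
          (ne_of_gt (hpos y (hsub ⟨hT.1.trans_le hy.1, hy.2⟩)))).continuousAt.continuousWithinAt)
        (fun y hy => (hderiv y (hsub ⟨hT.1.trans hy.1, hy.2.le⟩)).log
          (ne_of_gt (hpos y (hsub ⟨hT.1.trans hy.1, hy.2.le⟩))))
      have hxmem : x ∈ Set.Ioc (0:ℝ) ε₀ := ⟨hT.1.trans hx.1, hx.2.le⟩
      have h1 : Ω' x / Ω x ≤ M := hratio x hxmem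
      have hden : (0:ℝ) < ε₀ - T := sub_pos.mpr hlt
      have h2 : Real.log (Ω ε₀) - Real.log (Ω T) = (Ω' x / Ω x) * (ε₀ - T) := by
        field_simp at hxeq ⊢
        linarith [hxeq]
      nlinarith [hT.1]
  set a : ℝ := Real.exp (Real.log (Ω ε₀) - M * ε₀) with hadef
  have hapos : 0 < a := Real.exp_pos _
  have hbound : ∀ T ∈ Set.Ioc (0:ℝ) ε₀, a ≤ Ω T := by
    intro T hT
    have h1 := hlog T hT
    calc a ≤ Real.exp (Real.log (Ω T)) := Real.exp_le_exp.mpr h1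
      _ = Ω T := Real.exp_log (hpos T (hsub hT))
  -- Ω tends to 0 at 0⁺
  have htend : Tendsto Ω (𝓝[>] (0:ℝ)) (𝓝 0) := by
    have h0 : ContinuousWithinAt Ω (Set.Icc 0 c) 0 :=
      hcontΩ 0 ⟨le_refl 0, hc.le⟩
    have h1 : Tendsto Ω (𝓝[Set.Icc 0 c] 0) (𝓝 0) := by
      simpa [ContinuousWithinAt, hzero] using h0
    have h2 : 𝓝[>] (0:ℝ) = 𝓝[Set.Ioc 0 ε₀] (0:ℝ) :=
      (nhdsWithin_Ioc_eq_nhdsGT hε₀0).symm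
    rw [h2]
    exact h1.mono_left (nhdsWithin_mono _ (hsub.trans Set.Ioc_subset_Icc_self))
  have hev2 : ∀ᶠ T in 𝓝[>] (0:ℝ), Ω T < a :=
    htend.eventually (eventually_lt_nhds hapos)
  have hev3 : ∀ᶠ T in 𝓝[>] (0:ℝ), T ∈ Set.Ioc (0:ℝ) ε₀ :=
    Ioc_mem_nhdsGT_of_mem ⟨le_refl 0, hε₀0⟩
  obtain ⟨T, hT1, hT2⟩ := (hev2.and hev3).exists
  exact absurd (hbound T hT2) (not_le.mpr hT1)
end

section
/- If Ω is positive, strictly monotonically decreasing and C² on (0, c] (c > 0) with Ω' < 0, Ω(T) → +∞ as T → 0⁺, and λ = lim_{T→0⁺} Ω''Ω/(Ω')² exists, then λ ≥ 1. -/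
open Filter Topology

/-- Time-reversed variant (Remark B.3): if Ω is positive, strictly decreasing
and C² on (0,c] with Ω' < 0 and Ω → +∞ as T → 0⁺, and λ = lim_{T→0⁺}
Ω''Ω/(Ω')² exists in the extended reals, then λ ≥ 1. -/
theorem lambda_ge_one_of_diverging_past
    (c : ℝ) (hc : 0 < c) (Ω Ω' Ω'' : ℝ → ℝ)
    (hderiv : ∀ T ∈ Set.Ioc (0:ℝ) c, HasDerivAt Ω (Ω' T) T)
    (hderiv' : ∀ T ∈ Set.Ioc (0:ℝ) c, HasDerivAt Ω' (Ω'' T) T)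
    (hcont : ContinuousOn Ω'' (Set.Ioc 0 c))
    (hanti : StrictAntiOn Ω (Set.Ioc 0 c))
    (hpos : ∀ T ∈ Set.Ioc (0:ℝ) c, 0 < Ω T)
    (hneg' : ∀ T ∈ Set.Ioc (0:ℝ) c, Ω' T < 0)
    (hdiv : Tendsto Ω (𝓝[>] (0:ℝ)) atTop)
    (lam : EReal)
    (hlam : Tendsto (fun T => ((Ω'' T * Ω T / (Ω' T) ^ 2 : ℝ) : EReal))
      (𝓝[>] (0:ℝ)) (𝓝 lam)) :
    1 ≤ lam := by
  by_contra hcon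
  push_neg at hcon
  -- pick a real r with lam < r < 1
  obtain ⟨r, hlr, hr1⟩ := EReal.lt_iff_exists_real_btwn.mp hcon
  have hr1' : r < 1 := by exact_mod_cast hr1
  -- eventually L T < r
  have hev : ∀ᶠ T in 𝓝[>] (0:ℝ), Ω'' T * Ω T / (Ω' T) ^ 2 < r := by
    filter_upwards [hlam.eventually_lt_const hlr] with T hT
    exact_mod_cast hT
  obtain ⟨u, hu, hsub⟩ := mem_nhdsGT_iff_exists_Ioc_subset.mp hev
  set δ := min u c with hδdef
  have hδpos : 0 < δ := lt_min hu hc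
  have hδc : δ ≤ c := min_le_right _ _
  have hsubc : Set.Ioc (0:ℝ) δ ⊆ Set.Ioc 0 c := Set.Ioc_subset_Ioc_right hδc
  have hL : ∀ T ∈ Set.Ioc (0:ℝ) δ, Ω'' T * Ω T / (Ω' T) ^ 2 < r := fun T hT =>
    hsub (Set.Ioc_subset_Ioc_right (min_le_left _ _) hT)
  set h : ℝ → ℝ := fun T => Ω T / Ω' T with hh
  have hne : ∀ T ∈ Set.Ioc (0:ℝ) c, Ω' T ≠ 0 := fun T hT => (hneg' T hT).ne
  have hhderiv : ∀ T ∈ Set.Ioc (0:ℝ) c,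
      HasDerivAt h (1 - Ω'' T * Ω T / (Ω' T) ^ 2) T := by
    intro T hT
    have : HasDerivAt (fun x => Ω x / Ω' x) ((Ω' T * Ω' T - Ω T * Ω'' T) / Ω' T ^ 2) T :=
      (hderiv T hT).div (hderiv' T hT) (hne T hT)
    convert this using 1
    field_simp [hne T hT]
  -- h is monotone on Ioc 0 δ
  have hmono : StrictMonoOn h (Set.Ioc 0 δ) := by
    apply strictMonoOn_of_deriv_pos (convex_Ioc 0 δ)
    · intro T hT
      exact ((hhderiv T (hsubc hT)).continuousAt).continuousWithinAt
    · intro T hT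
      rw [interior_Ioc] at hT
      have hT' : T ∈ Set.Ioc (0:ℝ) δ := Set.Ioo_subset_Ioc_self hT
      rw [(hhderiv T (hsubc hT')).deriv]
      linarith [hL T hT', hr1']
  have hδmem : δ ∈ Set.Ioc (0:ℝ) δ := Set.right_mem_Ioc.mpr hδpos
  have hδmemc : δ ∈ Set.Ioc (0:ℝ) c := hsubc hδmem
  have hhδ : h δ < 0 := div_neg_of_pos_of_neg (hpos δ hδmemc) (hneg' δ hδmemc)
  have hhle : ∀ T ∈ Set.Ioc (0:ℝ) δ, h T ≤ h δ := by
    intro T hT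
    rcases eq_or_lt_of_le hT.2 with heq | hlt
    · rw [heq]
    · exact (hmono hT hδmem hlt).le
  set K : ℝ := -(1 / h δ) with hK
  have hKpos : 0 < K := by
    rw [hK]
    simp only [neg_pos]
    exact div_neg_of_pos_of_neg one_pos hhδ
  -- log Ω has derivative Ω'/Ω = 1/h with norm ≤ K on Ioc 0 δ
  have hlogderiv : ∀ T ∈ Set.Ioc (0:ℝ) δ,
      HasDerivWithinAt (fun T => Real.log (Ω T)) (Ω' T / Ω T) (Set.Ioc 0 δ) T := by
    intro T hT
    exact ((hderiv T (hsubc hT)).log (hpos T (hsubc hT)).ne').hasDerivWithinAt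
  have hbound : ∀ T ∈ Set.Ioc (0:ℝ) δ, ‖Ω' T / Ω T‖ ≤ K := by
    intro T hT
    have hTc := hsubc hT
    have h1 : Ω' T / Ω T = 1 / h T := by
      rw [hh]
      field_simp
    have hhT : h T < 0 := div_neg_of_pos_of_neg (hpos T hTc) (hneg' T hTc)
    have h2 : 1 / h δ ≤ 1 / h T := (one_div_le_one_div_of_neg hhδ hhT).mpr (hhle T hT)
    have h3 : 1 / h T < 0 := div_neg_of_pos_of_neg one_pos hhT
    rw [h1, Real.norm_eq_abs, abs_of_neg h3, hK]
    linarith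
  -- MVT bound: |log Ω δ - log Ω T| ≤ K δ
  have hmvt : ∀ T ∈ Set.Ioc (0:ℝ) δ,
      Ω T ≤ Real.exp (Real.log (Ω δ) + K * δ) := by
    intro T hT
    have := Convex.norm_image_sub_le_of_norm_hasDerivWithin_le
      (f := fun T => Real.log (Ω T)) (f' := fun T => Ω' T / Ω T)
      hlogderiv hbound (convex_Ioc 0 δ) hδmem hT
    rw [Real.norm_eq_abs, Real.norm_eq_abs] at this
    have h4 : Real.log (Ω T) - Real.log (Ω δ) ≤ K * |T - δ| :=
      le_trans (le_abs_self _) this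
    have h5 : |T - δ| ≤ δ := by
      rw [abs_sub_comm, abs_of_nonneg (by linarith [hT.2] : (0:ℝ) ≤ δ - T)]
      linarith [hT.1]
    have h6 : Real.log (Ω T) ≤ Real.log (Ω δ) + K * δ := by
      nlinarith [hKpos]
    calc Ω T = Real.exp (Real.log (Ω T)) := (Real.exp_log (hpos T (hsubc hT))).symm
      _ ≤ _ := Real.exp_le_exp.mpr h6
  -- contradiction with divergence
  have hev2 : ∀ᶠ T in 𝓝[>] (0:ℝ), Real.exp (Real.log (Ω δ) + K * δ) < Ω T :=
    hdiv.eventually (eventually_gt_atTop _)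
  have hev3 : Set.Ioc (0:ℝ) δ ∈ 𝓝[>] (0:ℝ) :=
    Ioc_mem_nhdsGT_of_mem (Set.left_mem_Ico.mpr hδpos)
  obtain ⟨T, hT1, hT2⟩ := (hev2.and hev3).exists
  exact absurd (hmvt T hT2) (not_le.mpr hT1)
end

section
/- Let Ω be positive, strictly monotonically decreasing, C² on (0,c] with Ω' < 0, Ω(T) → +∞ as T → 0⁺, and suppose λ = lim_{T→0⁺} Ω''Ω/(Ω')² exists with λ ≠ 1. Then Ω'(T)/Ω(T) → -∞ as T → 0⁺. -/
open Filter Topology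

/-- If the logarithmic derivative `Ω'/Ω` is bounded below by `-C` on `(0, δ]`,
then `Ω` is bounded on `(0, δ]`, contradicting `Ω → ∞` as `T → 0⁺`. -/
lemma bounded_ratio_contra (c : ℝ) (Ω Ω' : ℝ → ℝ)
    (hderiv : ∀ T ∈ Set.Ioc (0:ℝ) c, HasDerivAt Ω (Ω' T) T)
    (hpos : ∀ T ∈ Set.Ioc (0:ℝ) c, 0 < Ω T)
    (hdiv : Tendsto Ω (𝓝[>] (0:ℝ)) atTop)
    (δ C : ℝ) (hδ : δ ∈ Set.Ioc (0:ℝ) c) (hC : 0 ≤ C)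
    (hbd : ∀ T ∈ Set.Ioc (0:ℝ) δ, -C ≤ Ω' T / Ω T) : False := by
  have hsub : Set.Ioc (0:ℝ) δ ⊆ Set.Ioc 0 c := Set.Ioc_subset_Ioc_right hδ.2
  set F : ℝ → ℝ := fun t => Real.log (Ω t) + C * t with hF
  have hFd : ∀ T ∈ Set.Ioc (0:ℝ) δ, HasDerivAt F (Ω' T / Ω T + C) T := by
    intro T hT
    have h1 := (hderiv T (hsub hT)).log (hpos T (hsub hT)).ne'
    have h2 : HasDerivAt (fun t : ℝ => C * t) C T := by
      simpa using (hasDerivAt_id T).const_mul C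
    exact h1.add h2
  have hmono : MonotoneOn F (Set.Ioc (0:ℝ) δ) := by
    apply monotoneOn_of_hasDerivWithinAt_nonneg (convex_Ioc 0 δ)
      (f' := fun T => Ω' T / Ω T + C)
    · intro T hT
      exact (hFd T hT).continuousAt.continuousWithinAt
    · intro T hT
      rw [interior_Ioc] at hT
      exact (hFd T (Set.Ioo_subset_Ioc_self hT)).hasDerivWithinAt
    · intro T hT
      rw [interior_Ioc] at hT
      have := hbd T (Set.Ioo_subset_Ioc_self hT)
      linarith
  have hδmem : δ ∈ Set.Ioc (0:ℝ) δ := ⟨hδ.1, le_rfl⟩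
  have hbound : ∀ T ∈ Set.Ioc (0:ℝ) δ, Ω T ≤ Real.exp (Real.log (Ω δ) + C * δ) := by
    intro T hT
    have := hmono hT hδmem hT.2
    have hlog : Real.log (Ω T) ≤ Real.log (Ω δ) + C * δ := by
      have hCT : 0 ≤ C * T := mul_nonneg hC hT.1.le
      simp only [hF] at this
      linarith
    calc Ω T = Real.exp (Real.log (Ω T)) := (Real.exp_log (hpos T (hsub hT))).symm
      _ ≤ _ := Real.exp_le_exp.2 hlog
  have hev : ∀ᶠ T in 𝓝[>] (0:ℝ),
      Real.exp (Real.log (Ω δ) + C * δ) + 1 ≤ Ω T :=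
    hdiv.eventually (eventually_ge_atTop _)
  have hmem : Set.Ioc (0:ℝ) δ ∈ 𝓝[>] (0:ℝ) := Ioc_mem_nhdsGT hδ.1
  obtain ⟨T, hT1, hT2⟩ := (hev.and (eventually_iff.mpr hmem)).exists
  have := hbound T hT2
  linarith

/-- Remark B.5 (T → 0⁺ variant): if Ω is positive, strictly decreasing and C²
on (0,c] with Ω' < 0 and Ω → +∞ as T → 0⁺, and λ = lim_{T→0⁺} Ω''Ω/(Ω')²
exists with λ ≠ 1, then Ω'/Ω → -∞ as T → 0⁺. -/
theorem ratio_tendsto_atBot_of_diverging_past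
    (c : ℝ) (hc : 0 < c) (Ω Ω' Ω'' : ℝ → ℝ)
    (hderiv : ∀ T ∈ Set.Ioc (0:ℝ) c, HasDerivAt Ω (Ω' T) T)
    (hderiv' : ∀ T ∈ Set.Ioc (0:ℝ) c, HasDerivAt Ω' (Ω'' T) T)
    (hcont : ContinuousOn Ω'' (Set.Ioc 0 c))
    (hanti : StrictAntiOn Ω (Set.Ioc 0 c))
    (hpos : ∀ T ∈ Set.Ioc (0:ℝ) c, 0 < Ω T)
    (hneg' : ∀ T ∈ Set.Ioc (0:ℝ) c, Ω' T < 0)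
    (hdiv : Tendsto Ω (𝓝[>] (0:ℝ)) atTop)
    (lam : EReal)
    (hlam : Tendsto (fun T => ((Ω'' T * Ω T / (Ω' T) ^ 2 : ℝ) : EReal))
      (𝓝[>] (0:ℝ)) (𝓝 lam))
    (hlam1 : lam ≠ 1) :
    Tendsto (fun T => Ω' T / Ω T) (𝓝[>] (0:ℝ)) atBot := by
  -- h = Ω / Ω'
  set h : ℝ → ℝ := fun T => Ω T / Ω' T with hhdef
  have hh : ∀ T ∈ Set.Ioc (0:ℝ) c,
      HasDerivAt h (1 - Ω'' T * Ω T / (Ω' T) ^ 2) T := by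
    intro T hT
    have := (hderiv T hT).div (hderiv' T hT) (hneg' T hT).ne
    refine this.congr_deriv ?_
    have hne : Ω' T ≠ 0 := (hneg' T hT).ne
    field_simp
  have hhneg : ∀ T ∈ Set.Ioc (0:ℝ) c, h T < 0 := fun T hT =>
    div_neg_of_pos_of_neg (hpos T hT) (hneg' T hT)
  -- translate eventual statements into statements on Ioc 0 δ
  have hloc : ∀ P : ℝ → Prop, (∀ᶠ T in 𝓝[>] (0:ℝ), P T) →
      ∃ δ, δ ∈ Set.Ioc (0:ℝ) c ∧ ∀ T ∈ Set.Ioc (0:ℝ) δ, P T := by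
    intro P hP
    rw [eventually_iff, mem_nhdsGT_iff_exists_Ioc_subset] at hP
    obtain ⟨u, hu, hsub⟩ := hP
    exact ⟨min u c, ⟨lt_min hu hc, min_le_right _ _⟩,
      fun T hT => hsub ⟨hT.1, hT.2.trans (min_le_left _ _)⟩⟩
  rcases hlam1.lt_or_gt with hlt | hgt
  · -- case λ < 1 : impossible
    exfalso
    obtain ⟨r, hr1, hr2⟩ := EReal.exists_between_coe_real hlt
    have hev : ∀ᶠ T in 𝓝[>] (0:ℝ), Ω'' T * Ω T / (Ω' T) ^ 2 < r := by
      filter_upwards [hlam.eventually_lt_const hr1] with T hT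
      exact_mod_cast hT
    obtain ⟨δ, hδ, hbd⟩ := hloc _ hev
    have hr2' : (r:ℝ) < 1 := by exact_mod_cast hr2
    set ε : ℝ := 1 - r with hε
    have hεpos : 0 < ε := by linarith
    have hsub : Set.Ioc (0:ℝ) δ ⊆ Set.Ioc 0 c := Set.Ioc_subset_Ioc_right hδ.2
    -- G = h - ε·id is monotone on (0, δ]
    have hG : MonotoneOn (fun T => h T - ε * T) (Set.Ioc (0:ℝ) δ) := by
      apply monotoneOn_of_hasDerivWithinAt_nonneg (convex_Ioc 0 δ)
        (f' := fun T => (1 - Ω'' T * Ω T / (Ω' T) ^ 2) - ε)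
      · intro T hT
        exact ((hh T (hsub hT)).sub ((hasDerivAt_id T).const_mul ε)).continuousAt.continuousWithinAt
      · intro T hT
        rw [interior_Ioc] at hT
        have := (hh T (hsub (Set.Ioo_subset_Ioc_self hT))).sub
          ((hasDerivAt_id T).const_mul ε)
        refine (this.congr_deriv ?_).hasDerivWithinAt
        ring
      · intro T hT
        rw [interior_Ioc] at hT
        have := hbd T (Set.Ioo_subset_Ioc_self hT)
        simp only [hε]
        linarith
    set m : ℝ := ε * δ / 2 with hm
    have hmpos : 0 < m := by rw [hm]; exact div_pos (mul_pos hεpos hδ.1) two_pos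
    have hhle : ∀ T ∈ Set.Ioc (0:ℝ) (δ/2), h T ≤ -m := by
      intro T hT
      have hTδ : T ∈ Set.Ioc (0:ℝ) δ := ⟨hT.1, hT.2.trans (by linarith [hδ.1])⟩
      have hδδ : δ ∈ Set.Ioc (0:ℝ) δ := ⟨hδ.1, le_rfl⟩
      have h1 := hG hTδ hδδ hTδ.2
      have h2 := hhneg δ hδ
      have h3 : T ≤ δ / 2 := hT.2
      simp only [hm, hε] at *
      nlinarith [hεpos]
    -- so Ω'/Ω ≥ -(1/m) on (0, δ/2]
    have hbdr : ∀ T ∈ Set.Ioc (0:ℝ) (δ/2), -(1/m) ≤ Ω' T / Ω T := by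
      intro T hT
      have hTc : T ∈ Set.Ioc (0:ℝ) c :=
        ⟨hT.1, hT.2.trans ((half_le_self hδ.1.le).trans hδ.2)⟩
      have hΩ := hpos T hTc
      have hΩ' := hneg' T hTc
      have hle := hhle T hT
      rw [hhdef] at hle
      rw [div_le_iff_of_neg hΩ'] at hle
      rw [le_div_iff₀ hΩ]
      have hcancel : m * (1/m) = 1 := mul_one_div_cancel hmpos.ne'
      nlinarith
    exact bounded_ratio_contra c Ω Ω' hderiv hpos hdiv (δ/2) (1/m)
      ⟨half_pos hδ.1, (half_le_self hδ.1.le).trans hδ.2⟩ (by positivity) hbdr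
  · -- case λ > 1
    obtain ⟨r, hr1, hr2⟩ := EReal.exists_between_coe_real hgt
    have hr1' : (1:ℝ) < r := by exact_mod_cast hr1
    have hev : ∀ᶠ T in 𝓝[>] (0:ℝ), (r:ℝ) < Ω'' T * Ω T / (Ω' T) ^ 2 := by
      filter_upwards [hlam.eventually_const_lt hr2] with T hT
      exact_mod_cast hT
    obtain ⟨δ, hδ, hbd⟩ := hloc _ hev
    have hsub : Set.Ioc (0:ℝ) δ ⊆ Set.Ioc 0 c := Set.Ioc_subset_Ioc_right hδ.2
    have hanti_h : AntitoneOn h (Set.Ioc (0:ℝ) δ) := by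
      apply antitoneOn_of_hasDerivWithinAt_nonpos (convex_Ioc 0 δ)
        (f' := fun T => 1 - Ω'' T * Ω T / (Ω' T) ^ 2)
      · intro T hT
        exact (hh T (hsub hT)).continuousAt.continuousWithinAt
      · intro T hT
        rw [interior_Ioc] at hT
        exact (hh T (hsub (Set.Ioo_subset_Ioc_self hT))).hasDerivWithinAt
      · intro T hT
        rw [interior_Ioc] at hT
        have := hbd T (Set.Ioo_subset_Ioc_self hT)
        linarith
    -- main goal
    rw [tendsto_atBot]
    intro b
    set M : ℝ := max 1 (-b) with hM
    have hMpos : (0:ℝ) < M := lt_of_lt_of_le one_pos (le_max_left _ _)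
    have hMb : -M ≤ b := by
      have := le_max_right 1 (-b)
      simp only [hM]
      linarith
    have key : ∀ᶠ T in 𝓝[>] (0:ℝ), Ω' T / Ω T ≤ -M := by
      by_contra hcon
      rw [not_eventually] at hcon
      -- then h ≤ -1/M on all of (0, δ], giving Ω'/Ω ≥ -M there: contradiction
      have hclaim : ∀ T ∈ Set.Ioc (0:ℝ) δ, -M ≤ Ω' T / Ω T := by
        intro T hT
        have hmemT : Set.Ioo (0:ℝ) T ∈ 𝓝[>] (0:ℝ) := Ioo_mem_nhdsGT hT.1
        obtain ⟨T', hT'1, hT'2⟩ := (hcon.and_eventually (eventually_iff.mpr hmemT)).exists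
        push_neg at hT'1
        have hT'δ : T' ∈ Set.Ioc (0:ℝ) δ := ⟨hT'2.1, hT'2.2.le.trans hT.2⟩
        have hT'c : T' ∈ Set.Ioc (0:ℝ) c := hsub hT'δ
        have hΩ := hpos T' hT'c
        have hΩ' := hneg' T' hT'c
        -- h T' ≤ -1/M
        have hcancel : M * (1/M) = 1 := mul_one_div_cancel hMpos.ne'
        have hhT' : h T' ≤ -(1/M) := by
          rw [hhdef]
          rw [lt_div_iff₀ hΩ] at hT'1
          rw [div_le_iff_of_neg hΩ']
          nlinarith
        have hhT : h T ≤ -(1/M) := le_trans (hanti_h hT'δ hT hT'2.2.le) hhT'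
        have hTc : T ∈ Set.Ioc (0:ℝ) c := hsub hT
        have hΩT := hpos T hTc
        have hΩ'T := hneg' T hTc
        rw [hhdef, div_le_iff_of_neg hΩ'T] at hhT
        rw [le_div_iff₀ hΩT]
        nlinarith
      exact bounded_ratio_contra c Ω Ω' hderiv hpos hdiv δ M hδ hMpos.le hclaim
    filter_upwards [key] with T hT
    linarith
end

section
/- Let Ω be continuous on [0,c], positive, strictly monotonically increasing, and C² on (0,c] with Ω' > 0, Ω(0) = 0, and suppose λ = lim_{T→0⁺} Ω''Ω/(Ω')² exists with λ ≠ 1. Then Ω'(T)/Ω(T) → +∞ as T → 0⁺. -/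
open Filter Topology

lemma keyA (c : ℝ) (hc : 0 < c) (Ω Ω' : ℝ → ℝ)
    (hcontΩ : ContinuousOn Ω (Set.Icc 0 c))
    (hderiv : ∀ T ∈ Set.Ioc (0:ℝ) c, HasDerivAt Ω (Ω' T) T)
    (hpos : ∀ T ∈ Set.Ioc (0:ℝ) c, 0 < Ω T)
    (hpos' : ∀ T ∈ Set.Ioc (0:ℝ) c, 0 < Ω' T)
    (hzero : Ω 0 = 0)
    (ε δ : ℝ) (hε : 0 < ε) (hδ0 : 0 < δ) (hδc : δ ≤ c)
    (h : ∀ T ∈ Set.Ioc (0:ℝ) δ, ε ≤ Ω T / Ω' T) : False := by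
  set η := Real.exp (Real.log (Ω δ) - δ/ε) with hη
  have hη0 : 0 < η := Real.exp_pos _
  have hsub : Set.Ioo (0:ℝ) δ ⊆ Set.Icc 0 c :=
    fun x hx => ⟨hx.1.le, hx.2.le.trans hδc⟩
  haveI : (𝓝[Set.Ioo (0:ℝ) δ] 0).NeBot := by
    apply mem_closure_iff_nhdsWithin_neBot.mp
    rw [closure_Ioo hδ0.ne]
    exact ⟨le_refl 0, hδ0.le⟩
  have htend : Tendsto Ω (𝓝[Set.Ioo (0:ℝ) δ] 0) (𝓝 0) := by
    have h0 := (hcontΩ 0 ⟨le_refl _, hc.le⟩).mono hsub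
    rwa [ContinuousWithinAt, hzero] at h0
  obtain ⟨T, hTη, hTmem⟩ :=
    ((htend.eventually (gt_mem_nhds hη0)).and eventually_mem_nhdsWithin).exists
  obtain ⟨hT0, hTδ⟩ := hTmem
  have hmem : ∀ x ∈ Set.Icc T δ, x ∈ Set.Ioc (0:ℝ) c :=
    fun x hx => ⟨hT0.trans_le hx.1, hx.2.trans hδc⟩
  have hcont' : ContinuousOn (fun x => Real.log (Ω x)) (Set.Icc T δ) := by
    apply ContinuousOn.log
    · exact hcontΩ.mono (fun x hx => ⟨hT0.le.trans hx.1, hx.2.trans hδc⟩)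
    · exact fun x hx => (hpos x (hmem x hx)).ne'
  have hd : ∀ x ∈ Set.Ioo T δ, HasDerivAt (fun y => Real.log (Ω y)) (Ω' x / Ω x) x := by
    intro x hx
    have hx' : x ∈ Set.Ioc (0:ℝ) c := hmem x ⟨hx.1.le, hx.2.le⟩
    exact (hderiv x hx').log (hpos x hx').ne'
  obtain ⟨ξ, hξ, hslope⟩ := exists_hasDerivAt_eq_slope _ _ hTδ hcont' hd
  have hξ' : ξ ∈ Set.Ioc (0:ℝ) c := hmem ξ ⟨hξ.1.le, hξ.2.le⟩
  have hΩξ := hpos ξ hξ'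
  have hΩ'ξ := hpos' ξ hξ'
  have hbound : Ω' ξ / Ω ξ ≤ 1/ε := by
    have := h ξ ⟨hξ'.1, hξ.2.le⟩
    rw [le_div_iff₀ hΩ'ξ] at this
    rw [div_le_div_iff₀ hΩξ hε]
    nlinarith
  have hTc : T ∈ Set.Ioc (0:ℝ) c := ⟨hT0, hTδ.le.trans hδc⟩
  have hΩT := hpos T hTc
  have hlogT : Real.log (Ω T) < Real.log (Ω δ) - δ/ε := by
    calc Real.log (Ω T) < Real.log η := Real.log_lt_log hΩT hTη
    _ = Real.log (Ω δ) - δ/ε := Real.log_exp _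
  have hdiff : Real.log (Ω δ) - Real.log (Ω T) = (Ω' ξ / Ω ξ) * (δ - T) := by
    rw [hslope, div_mul_cancel₀ _ (by linarith : δ - T ≠ 0)]
  have h1 : (Ω' ξ / Ω ξ) * (δ - T) ≤ (1/ε) * (δ - T) := by
    apply mul_le_mul_of_nonneg_right hbound
    linarith [hTδ]
  have h2 : (1/ε) * (δ - T) ≤ δ/ε := by
    rw [div_mul_eq_mul_div, one_mul, div_le_div_iff₀ hε hε]
    nlinarith
  linarith

/-- Remark B.5 (T → 0⁺ variant): if Ω is continuous on [0,c], positive,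
strictly increasing and C² on (0,c] with Ω' > 0 and Ω(0) = 0, and
λ = lim_{T→0⁺} Ω''Ω/(Ω')² exists with λ ≠ 1, then Ω'/Ω → +∞ as T → 0⁺. -/
theorem ratio_tendsto_atTop_of_vanishing_past
    (c : ℝ) (hc : 0 < c) (Ω Ω' Ω'' : ℝ → ℝ)
    (hcontΩ : ContinuousOn Ω (Set.Icc 0 c))
    (hderiv : ∀ T ∈ Set.Ioc (0:ℝ) c, HasDerivAt Ω (Ω' T) T)
    (hderiv' : ∀ T ∈ Set.Ioc (0:ℝ) c, HasDerivAt Ω' (Ω'' T) T)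
    (hcont : ContinuousOn Ω'' (Set.Ioc 0 c))
    (hmono : StrictMonoOn Ω (Set.Ioc 0 c))
    (hpos : ∀ T ∈ Set.Ioc (0:ℝ) c, 0 < Ω T)
    (hpos' : ∀ T ∈ Set.Ioc (0:ℝ) c, 0 < Ω' T)
    (hzero : Ω 0 = 0)
    (lam : EReal)
    (hlam : Tendsto (fun T => ((Ω'' T * Ω T / (Ω' T) ^ 2 : ℝ) : EReal))
      (𝓝[>] (0:ℝ)) (𝓝 lam))
    (hlam1 : lam ≠ 1) :
    Tendsto (fun T => Ω' T / Ω T) (𝓝[>] (0:ℝ)) atTop := by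
  set g : ℝ → ℝ := fun T => Ω T / Ω' T with hg
  -- derivative of g
  have hgderiv : ∀ T ∈ Set.Ioc (0:ℝ) c,
      HasDerivAt g ((Ω' T * Ω' T - Ω T * Ω'' T) / (Ω' T) ^ 2) T := by
    intro T hT
    exact (hderiv T hT).div (hderiv' T hT) (hpos' T hT).ne'
  rcases hlam1.lt_or_gt with hl | hl
  · -- lam < 1 : eventually ratio < 1, g strictly increasing near 0
    have hev : ∀ᶠ T in 𝓝[>] (0:ℝ), Ω'' T * Ω T / (Ω' T) ^ 2 < 1 := by
      have h1 : ∀ᶠ T in 𝓝[>] (0:ℝ),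
          ((Ω'' T * Ω T / (Ω' T) ^ 2 : ℝ) : EReal) < ((1:ℝ) : EReal) := by
        apply hlam.eventually_lt_const
        rwa [EReal.coe_one]
      filter_upwards [h1] with T hT
      exact_mod_cast hT
    obtain ⟨δ', hδ'mem, hδ'sub⟩ := mem_nhdsGT_iff_exists_Ioc_subset.mp hev
    set δ₀ := min δ' c with hδ₀
    have hδ'0 : (0:ℝ) < δ' := hδ'mem
    have hδ₀0 : 0 < δ₀ := lt_min hδ'0 hc
    have hδ₀c : δ₀ ≤ c := min_le_right _ _
    have hsub : Set.Ioc (0:ℝ) δ₀ ⊆ Set.Ioc 0 c :=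
      fun x hx => ⟨hx.1, hx.2.trans hδ₀c⟩
    have hratio : ∀ T ∈ Set.Ioc (0:ℝ) δ₀, Ω'' T * Ω T / (Ω' T) ^ 2 < 1 :=
      fun T hT => hδ'sub ⟨hT.1, hT.2.trans (min_le_left _ _)⟩
    -- g strictly monotone on (0, δ₀]
    have hmonog : ∀ a ∈ Set.Ioc (0:ℝ) δ₀, ∀ b ∈ Set.Ioc (0:ℝ) δ₀, a < b → g a < g b := by
      intro a ha b hb hab
      have hmem' : ∀ x ∈ Set.Icc a b, x ∈ Set.Ioc (0:ℝ) δ₀ :=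
        fun x hx => ⟨ha.1.trans_le hx.1, hx.2.trans hb.2⟩
      have hcg : ContinuousOn g (Set.Icc a b) := fun x hx =>
        (hgderiv x (hsub (hmem' x hx))).continuousAt.continuousWithinAt
      have hdg : ∀ x ∈ Set.Ioo a b,
          HasDerivAt g ((Ω' x * Ω' x - Ω x * Ω'' x) / (Ω' x) ^ 2) x :=
        fun x hx => hgderiv x (hsub (hmem' x ⟨hx.1.le, hx.2.le⟩))
      obtain ⟨ξ, hξ, hs⟩ := exists_hasDerivAt_eq_slope g _ hab hcg hdg
      have hξ0 : ξ ∈ Set.Ioc (0:ℝ) δ₀ := hmem' ξ ⟨hξ.1.le, hξ.2.le⟩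
      have hΩ'ξ := hpos' ξ (hsub hξ0)
      have hΩξ := hpos ξ (hsub hξ0)
      have hr := hratio ξ hξ0
      rw [div_lt_one (by positivity)] at hr
      have hnum : 0 < (Ω' ξ * Ω' ξ - Ω ξ * Ω'' ξ) / (Ω' ξ) ^ 2 := by
        apply div_pos _ (by positivity)
        nlinarith
      rw [hs] at hnum
      have := (div_pos_iff.mp hnum)
      rcases this with ⟨h1, _⟩ | ⟨_, h2⟩
      · linarith
      · linarith
    -- conclude
    rw [tendsto_atTop]
    intro M
    set M' := max M 1 with hM'
    have hM'0 : 0 < M' := lt_of_lt_of_le one_pos (le_max_right _ _)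
    have hε : 0 < 1 / M' := by positivity
    have hnot : ¬ (∀ T ∈ Set.Ioc (0:ℝ) δ₀, 1/M' ≤ g T) := by
      intro hcon
      exact keyA c hc Ω Ω' hcontΩ hderiv hpos hpos' hzero (1/M') δ₀ hε hδ₀0 hδ₀c hcon
    push_neg at hnot
    obtain ⟨T₀, hT₀mem, hT₀⟩ := hnot
    filter_upwards [Ioo_mem_nhdsGT_of_mem ⟨le_refl (0:ℝ), hT₀mem.1⟩] with T hT
    have hTmem : T ∈ Set.Ioc (0:ℝ) δ₀ := ⟨hT.1, hT.2.le.trans hT₀mem.2⟩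
    have hgT : g T < 1/M' := (hmonog T hTmem T₀ hT₀mem hT.2).trans_le hT₀.le
    have hΩT := hpos T (hsub hTmem)
    have hΩ'T := hpos' T (hsub hTmem)
    rw [hg, div_lt_div_iff₀ hΩ'T hM'0] at hgT
    calc M ≤ M' := le_max_left _ _
    _ ≤ Ω' T / Ω T := by rw [le_div_iff₀ hΩT]; nlinarith
  · -- lam > 1 : impossible
    have hev : ∀ᶠ T in 𝓝[>] (0:ℝ), 1 < Ω'' T * Ω T / (Ω' T) ^ 2 := by
      have h1 : ∀ᶠ T in 𝓝[>] (0:ℝ),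
          ((1:ℝ) : EReal) < ((Ω'' T * Ω T / (Ω' T) ^ 2 : ℝ) : EReal) := by
        apply hlam.eventually_const_lt
        rwa [EReal.coe_one]
      filter_upwards [h1] with T hT
      exact_mod_cast hT
    obtain ⟨δ', hδ'mem, hδ'sub⟩ := mem_nhdsGT_iff_exists_Ioc_subset.mp hev
    set δ₀ := min δ' c with hδ₀
    have hδ'0 : (0:ℝ) < δ' := hδ'mem
    have hδ₀0 : 0 < δ₀ := lt_min hδ'0 hc
    have hδ₀c : δ₀ ≤ c := min_le_right _ _
    have hsub : Set.Ioc (0:ℝ) δ₀ ⊆ Set.Ioc 0 c :=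
      fun x hx => ⟨hx.1, hx.2.trans hδ₀c⟩
    have hratio : ∀ T ∈ Set.Ioc (0:ℝ) δ₀, 1 < Ω'' T * Ω T / (Ω' T) ^ 2 :=
      fun T hT => hδ'sub ⟨hT.1, hT.2.trans (min_le_left _ _)⟩
    have hantig : ∀ a ∈ Set.Ioc (0:ℝ) δ₀, ∀ b ∈ Set.Ioc (0:ℝ) δ₀, a < b → g b < g a := by
      intro a ha b hb hab
      have hmem' : ∀ x ∈ Set.Icc a b, x ∈ Set.Ioc (0:ℝ) δ₀ :=
        fun x hx => ⟨ha.1.trans_le hx.1, hx.2.trans hb.2⟩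
      have hcg : ContinuousOn g (Set.Icc a b) := fun x hx =>
        (hgderiv x (hsub (hmem' x hx))).continuousAt.continuousWithinAt
      have hdg : ∀ x ∈ Set.Ioo a b,
          HasDerivAt g ((Ω' x * Ω' x - Ω x * Ω'' x) / (Ω' x) ^ 2) x :=
        fun x hx => hgderiv x (hsub (hmem' x ⟨hx.1.le, hx.2.le⟩))
      obtain ⟨ξ, hξ, hs⟩ := exists_hasDerivAt_eq_slope g _ hab hcg hdg
      have hξ0 : ξ ∈ Set.Ioc (0:ℝ) δ₀ := hmem' ξ ⟨hξ.1.le, hξ.2.le⟩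
      have hΩ'ξ := hpos' ξ (hsub hξ0)
      have hΩξ := hpos ξ (hsub hξ0)
      have hr := hratio ξ hξ0
      rw [lt_div_iff₀ (by positivity : (0:ℝ) < (Ω' ξ)^2)] at hr
      have hnum : (Ω' ξ * Ω' ξ - Ω ξ * Ω'' ξ) / (Ω' ξ) ^ 2 < 0 := by
        apply div_neg_of_neg_of_pos _ (by positivity)
        nlinarith
      rw [hs] at hnum
      have := (div_neg_iff.mp hnum)
      rcases this with ⟨_, h2⟩ | ⟨h1, _⟩
      · linarith
      · linarith
    have hgδ₀ : 0 < g δ₀ :=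
      div_pos (hpos δ₀ (hsub ⟨hδ₀0, le_refl _⟩)) (hpos' δ₀ (hsub ⟨hδ₀0, le_refl _⟩))
    exact absurd (fun T hT => by
      rcases eq_or_lt_of_le hT.2 with he | hlt
      · rw [he]
      · exact (hantig T hT δ₀ ⟨hδ₀0, le_refl _⟩ hlt).le)
      (fun hcon => keyA c hc Ω Ω' hcontΩ hderiv hpos hpos' hzero (g δ₀) δ₀ hgδ₀ hδ₀0 hδ₀c hcon)
end
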